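/- arXiv:1905.13740 — 2 statements merged into one kernel-verified Lean document; each statement's English description precedes it below -/
import Mathlib

section
/- Let (N, ⊴, c) be a MinBudget instance, I ⊆ N an irreducible ideal of ⊴, and J ⊆ N \ I an irreducible ideal of ⊴ restricted to N \ I. If I ≻ J in the cbr-preorder, then I ∪ J ⪯ I in the cbr-preorder. -/
open List

variable {ι : Type*} [DecidableEq ι]

/-- Total cost of a schedule (list of jobs). -/
def listCost (c : ι → ℝ) (S : List ι) : ℝ := (S.map c).sum

/-- Budget of a schedule: maximum cost of a prefix (the empty prefix has cost 0). -/
def listBudget (c : ι → ℝ) : List ι → ℝ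
  | [] => 0
  | j :: t => max 0 (c j + listBudget c t)

/-- Return of a schedule. -/
def listReturn (c : ι → ℝ) (S : List ι) : ℝ := listCost c S - listBudget c S

/-- `S` enumerates the finite job set `N` without repetition. -/
def IsScheduleOf (N : Finset ι) (S : List ι) : Prop :=
  S.Nodup ∧ ∀ j, j ∈ S ↔ j ∈ N

/-- `S` is a linear extension of the precedence relation `r` (restricted to its jobs). -/
def RespectsOrder (r : ι → ι → Prop) (S : List ι) : Prop :=
  ∀ i j, r i j → i ∈ S → j ∈ S → S.idxOf i ≤ S.idxOf j

/-- Minimum budget over all feasible schedules of the job set `X`. -/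
noncomputable def setBudget (r : ι → ι → Prop) (c : ι → ℝ) (X : Finset ι) : ℝ :=
  sInf {b | ∃ S : List ι, IsScheduleOf X S ∧ RespectsOrder r S ∧ listBudget c S = b}

/-- Total cost of a job set. -/
def setCost (c : ι → ℝ) (X : Finset ι) : ℝ := ∑ j ∈ X, c j

/-- Return of a job set. -/
noncomputable def setReturn (r : ι → ι → Prop) (c : ι → ℝ) (X : Finset ι) : ℝ :=
  setCost c X - setBudget r c X

/-- The cbr-preorder on job sets. -/
def cbrLE (r : ι → ι → Prop) (c : ι → ℝ) (X Y : Finset ι) : Prop :=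
  (setCost c X < 0 ∧ 0 ≤ setCost c Y) ∨
  (setCost c X < 0 ∧ setCost c Y < 0 ∧ setBudget r c X < setBudget r c Y) ∨
  (setCost c X < 0 ∧ setCost c Y < 0 ∧ setBudget r c X = setBudget r c Y ∧
    setReturn r c X ≤ setReturn r c Y) ∨
  (0 ≤ setCost c X ∧ 0 ≤ setCost c Y ∧ setReturn r c X ≤ setReturn r c Y)

/-- `J` is an ideal (downward-closed subset) of `r` restricted to `I`. -/
def IsIdealIn (r : ι → ι → Prop) (I J : Finset ι) : Prop :=
  J ⊆ I ∧ ∀ j ∈ J, ∀ i ∈ I, r i j → i ∈ J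

/-- `F` is a filter (upward-closed subset) of `r` restricted to `I`. -/
def IsFilterIn (r : ι → ι → Prop) (I F : Finset ι) : Prop :=
  F ⊆ I ∧ ∀ i ∈ F, ∀ j ∈ I, r i j → j ∈ F

/-- `I` is an interval of `r` on `N`: intersection of an ideal and a filter. -/
def IsIntervalIn (r : ι → ι → Prop) (N I : Finset ι) : Prop :=
  ∃ J F, IsIdealIn r N J ∧ IsFilterIn r N F ∧ I = J ∩ F

/-- An irreducible interval: every ideal of the restricted order is `⪰` the interval. -/
def IsIrreducibleIn (r : ι → ι → Prop) (c : ι → ℝ) (N I : Finset ι) : Prop :=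
  IsIntervalIn r N I ∧ ∀ J, IsIdealIn r I J → cbrLE r c I J

/-- A schedule (given as blocks `SS`) in increasing irreducible structure. -/
def IncIrrStructure (r : ι → ι → Prop) (c : ι → ℝ) (N : Finset ι)
    (SS : List (List ι)) : Prop :=
  IsScheduleOf N SS.flatten ∧ RespectsOrder r SS.flatten ∧
  (∀ S ∈ SS, IsIrreducibleIn r c N S.toFinset ∧ RespectsOrder r S ∧
    listBudget c S = setBudget r c S.toFinset) ∧
  ∀ i j : Fin SS.length, i < j → cbrLE r c (SS.get i).toFinset (SS.get j).toFinset

set_option linter.unusedSectionVars false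

section ListLemmas

variable {ι : Type*} [DecidableEq ι] (c : ι → ℝ) (r : ι → ι → Prop)

lemma listBudget_nil : listBudget c ([] : List ι) = 0 := rfl

lemma listBudget_cons (j : ι) (t : List ι) :
    listBudget c (j :: t) = max 0 (c j + listBudget c t) := rfl

lemma listBudget_nonneg (S : List ι) : 0 ≤ listBudget c S := by
  cases S with
  | nil => simp [listBudget]
  | cons j t => simp [listBudget]

lemma listCost_nil : listCost c ([] : List ι) = 0 := rfl

lemma listCost_cons (j : ι) (t : List ι) : listCost c (j :: t) = c j + listCost c t := by
  simp [listCost]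

lemma listCost_append (A B : List ι) :
    listCost c (A ++ B) = listCost c A + listCost c B := by
  simp [listCost]

lemma listCost_le_listBudget (S : List ι) : listCost c S ≤ listBudget c S := by
  induction S with
  | nil => simp [listCost, listBudget]
  | cons j t ih =>
    rw [listCost_cons, listBudget_cons]
    refine le_trans ?_ (le_max_right _ _)
    linarith

lemma listBudget_append (A B : List ι) :
    listBudget c (A ++ B) = max (listBudget c A) (listCost c A + listBudget c B) := by
  induction A with
  | nil =>
    rw [List.nil_append, listBudget_nil, listCost_nil, zero_add]
    exact (max_eq_right (listBudget_nonneg c B)).symm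
  | cons j t ih =>
    rw [List.cons_append, listBudget_cons, ih, listBudget_cons, listCost_cons]
    rw [show c j + max (listBudget c t) (listCost c t + listBudget c B)
          = max (c j + listBudget c t) (c j + (listCost c t + listBudget c B)) from
        (max_add_add_left _ _ _).symm, ← max_assoc, ← add_assoc]

lemma listCost_take_le_listBudget (S : List ι) (n : ℕ) :
    listCost c (S.take n) ≤ listBudget c S := by
  conv_rhs => rw [← List.take_append_drop n S]
  rw [listBudget_append]
  exact le_trans (listCost_le_listBudget c _) (le_max_left _ _)

lemma listBudget_eq_zero_or_take (S : List ι) :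
    listBudget c S = 0 ∨ ∃ n, listBudget c S = listCost c (S.take n) := by
  induction S with
  | nil => left; rfl
  | cons j t ih =>
    rw [listBudget_cons]
    rcases le_total (c j + listBudget c t) 0 with h | h
    · left; exact max_eq_left h
    · rw [max_eq_right h]
      rcases ih with h0 | ⟨n, hn⟩
      · right; exact ⟨1, by simp [listCost_cons, listCost_nil, h0]⟩
      · right
        exact ⟨n + 1, by simp [List.take_succ_cons, listCost_cons, hn]⟩

end ListLemmas
section IndexLemmas

variable {ι : Type*} [DecidableEq ι]

lemma mem_take_iff_indexOf_lt {S : List ι} {x : ι} {n : ℕ} :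
    x ∈ S.take n ↔ x ∈ S ∧ S.idxOf x < n := by
  constructor
  · intro hx
    have hxS : x ∈ S := List.mem_of_mem_take hx
    refine ⟨hxS, ?_⟩
    have h1 : S.idxOf x = (S.take n).idxOf x := by
      conv_lhs => rw [← List.take_append_drop n S]
      exact List.idxOf_append_of_mem hx
    rw [h1]
    exact lt_of_lt_of_le (List.idxOf_lt_length_iff.2 hx) (le_trans (List.length_take (i := n) (l := S)).le (min_le_left _ _))
  · rintro ⟨hxS, hlt⟩
    by_contra hxn
    have h1 : S.idxOf x = (S.take n).length + (S.drop n).idxOf x := by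
      conv_lhs => rw [← List.take_append_drop n S]
      exact List.idxOf_append_of_notMem hxn
    rcases le_or_gt n S.length with hn | hn
    · rw [List.length_take, min_eq_left hn] at h1
      omega
    · exact hxn (by rw [List.take_of_length_le hn.le]; exact hxS)

lemma exists_take_filter (p : ι → Bool) (S : List ι) (t : ℕ) :
    ∃ n, (S.filter p).take t = (S.take n).filter p := by
  induction S generalizing t with
  | nil => exact ⟨0, by simp⟩
  | cons a T ih =>
    cases t with
    | zero => exact ⟨0, by simp⟩
    | succ t =>
      by_cases hpa : p a
      · obtain ⟨n, hn⟩ := ih t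
        refine ⟨n + 1, ?_⟩
        simp [List.filter_cons, hpa, List.take_succ_cons, hn]
      · obtain ⟨n, hn⟩ := ih (t + 1)
        refine ⟨n + 1, ?_⟩
        simp [List.filter_cons, hpa, List.take_succ_cons, hn]

lemma indexOf_filter_mono (p : ι → Bool) {S : List ι} (hnd : S.Nodup) {i j : ι}
    (hi : i ∈ S.filter p) (hj : j ∈ S.filter p)
    (hij : S.idxOf i ≤ S.idxOf j) :
    (S.filter p).idxOf i ≤ (S.filter p).idxOf j := by
  induction S with
  | nil => simp at hi
  | cons a T ih =>
    have hnda : a ∉ T := (List.nodup_cons.1 hnd).1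
    have hndT : T.Nodup := (List.nodup_cons.1 hnd).2
    by_cases hia : i = a
    · subst hia
      have hpa : p i = true := (List.mem_filter.1 hi).2
      simp [List.filter_cons, hpa]
    · by_cases hja : j = a
      · subst hja
        rw [List.idxOf_cons_self] at hij
        rw [List.idxOf_cons_ne _ (Ne.symm hia)] at hij
        omega
      · have hiT : i ∈ T.filter p := by
          rcases List.mem_filter.1 hi with ⟨hmem, hp⟩
          rcases List.mem_cons.1 hmem with h | h
          · exact absurd h hia
          · exact List.mem_filter.2 ⟨h, hp⟩
        have hjT : j ∈ T.filter p := by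
          rcases List.mem_filter.1 hj with ⟨hmem, hp⟩
          rcases List.mem_cons.1 hmem with h | h
          · exact absurd h hja
          · exact List.mem_filter.2 ⟨h, hp⟩
        have hijT : T.idxOf i ≤ T.idxOf j := by
          rw [List.idxOf_cons_ne _ (Ne.symm hia), List.idxOf_cons_ne _ (Ne.symm hja)] at hij
          omega
        have := ih hndT hiT hjT hijT
        by_cases hpa : p a
        · rw [List.filter_cons_of_pos hpa]
          rw [List.idxOf_cons_ne _ (Ne.symm hia), List.idxOf_cons_ne _ (Ne.symm hja)]
          omega
        · rw [List.filter_cons_of_neg hpa]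
          exact this

end IndexLemmas
section ScheduleLemmas

variable {ι : Type*} [DecidableEq ι] {c : ι → ℝ} {r : ι → ι → Prop}

lemma respectsOrder_filter (p : ι → Bool) {S : List ι} (hnd : S.Nodup)
    (h : RespectsOrder r S) : RespectsOrder r (S.filter p) := by
  intro i j hrij hi hj
  exact indexOf_filter_mono p hnd hi hj
    (h i j hrij (List.mem_of_mem_filter hi) (List.mem_of_mem_filter hj))

lemma isScheduleOf_filter {X A : Finset ι} {S : List ι} (hS : IsScheduleOf X S)
    (hA : A ⊆ X) : IsScheduleOf A (S.filter (fun x => decide (x ∈ A))) := by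
  constructor
  · exact hS.1.filter _
  · intro j
    simp only [List.mem_filter, decide_eq_true_eq, hS.2 j]
    exact ⟨fun h => h.2, fun h => ⟨hA h, h⟩⟩

lemma isScheduleOf_append {X Y : Finset ι} {SX SY : List ι}
    (hdisj : Disjoint X Y) (hSX : IsScheduleOf X SX) (hSY : IsScheduleOf Y SY) :
    IsScheduleOf (X ∪ Y) (SX ++ SY) := by
  constructor
  · rw [List.nodup_append]
    refine ⟨hSX.1, hSY.1, fun a haX b haY hab => ?_⟩
    exact Finset.disjoint_left.1 hdisj ((hSX.2 a).1 haX) ((hSY.2 a).1 (hab ▸ haY))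
  · intro j
    rw [List.mem_append, Finset.mem_union, hSX.2 j, hSY.2 j]

lemma respectsOrder_append {X Y : Finset ι} {SX SY : List ι}
    (hdisj : Disjoint X Y) (hSX : IsScheduleOf X SX) (hSY : IsScheduleOf Y SY)
    (hX2 : RespectsOrder r SX) (hY2 : RespectsOrder r SY)
    (hcross : ∀ x ∈ X, ∀ y ∈ Y, ¬ r y x) :
    RespectsOrder r (SX ++ SY) := by
  intro i j hrij hi hj
  rcases List.mem_append.1 hi with hiX | hiY
  · rcases List.mem_append.1 hj with hjX | hjY
    · rw [List.idxOf_append_of_mem hiX, List.idxOf_append_of_mem hjX]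
      exact hX2 i j hrij hiX hjX
    · have hjX : j ∉ SX := fun hc =>
        Finset.disjoint_left.1 hdisj ((hSX.2 j).1 hc) ((hSY.2 j).1 hjY)
      rw [List.idxOf_append_of_mem hiX, List.idxOf_append_of_notMem hjX]
      exact le_trans (List.idxOf_lt_length_iff.2 hiX).le (Nat.le_add_right _ _)
  · rcases List.mem_append.1 hj with hjX | hjY
    · exact absurd hrij (hcross j ((hSX.2 j).1 hjX) i ((hSY.2 i).1 hiY))
    · have hiX : i ∉ SX := fun hc =>
        Finset.disjoint_left.1 hdisj ((hSX.2 i).1 hc) ((hSY.2 i).1 hiY)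
      have hjX : j ∉ SX := fun hc =>
        Finset.disjoint_left.1 hdisj ((hSX.2 j).1 hc) ((hSY.2 j).1 hjY)
      rw [List.idxOf_append_of_notMem hiX, List.idxOf_append_of_notMem hjX]
      exact Nat.add_le_add_left (hY2 i j hrij hiY hjY) _

lemma exists_rMinimal (hr : IsPartialOrder ι r) (X : Finset ι) (hX : X.Nonempty) :
    ∃ m ∈ X, ∀ y ∈ X, r y m → y = m := by
  letI : PartialOrder ι :=
    { le := r
      le_refl := hr.refl
      le_trans := fun a b c hab hbc => hr.trans a b c hab hbc
      le_antisymm := fun a b hab hba => hr.antisymm a b hab hba }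
  obtain ⟨m, hm, hmin⟩ := X.exists_minimal hX
  refine ⟨m, hm, fun y hy hym => ?_⟩
  exact hr.antisymm y m hym (hmin hy hym)

lemma exists_schedule (hr : IsPartialOrder ι r) (X : Finset ι) :
    ∃ S : List ι, IsScheduleOf X S ∧ RespectsOrder r S := by
  induction X using Finset.strongInductionOn with
  | _ X ih =>
    rcases X.eq_empty_or_nonempty with hX | hX
    · subst hX
      exact ⟨[], ⟨List.nodup_nil, by simp⟩, fun i j _ hi _ => absurd hi List.not_mem_nil⟩
    · obtain ⟨m, hm, hmin⟩ := exists_rMinimal hr X hX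
      obtain ⟨S', hS', hO'⟩ := ih (X.erase m) (Finset.erase_ssubset hm)
      have hmS' : m ∉ S' := fun hc => (Finset.mem_erase.1 ((hS'.2 m).1 hc)).1 rfl
      refine ⟨m :: S', ⟨List.nodup_cons.2 ⟨hmS', hS'.1⟩, fun j => ?_⟩, ?_⟩
      · rw [List.mem_cons, hS'.2 j, Finset.mem_erase]
        constructor
        · rintro (rfl | ⟨_, hj⟩)
          · exact hm
          · exact hj
        · intro hj
          rcases eq_or_ne j m with rfl | hne
          · exact Or.inl rfl
          · exact Or.inr ⟨hne, hj⟩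
      · intro i j hrij hi hj
        rcases eq_or_ne i m with rfl | hine
        · rw [List.idxOf_cons_self]
          exact Nat.zero_le _
        · rcases eq_or_ne j m with rfl | hjne
          · have : i ∈ X := by
              rcases List.mem_cons.1 hi with h | h
              · exact absurd h hine
              · exact Finset.mem_of_mem_erase ((hS'.2 i).1 h)
            exact absurd (hmin i this hrij) hine
          · have hiS' : i ∈ S' := by
              rcases List.mem_cons.1 hi with h | h
              · exact absurd h hine
              · exact h
            have hjS' : j ∈ S' := by
              rcases List.mem_cons.1 hj with h | h
              · exact absurd h hjne
              · exact h
            rw [List.idxOf_cons_ne _ (Ne.symm hine), List.idxOf_cons_ne _ (Ne.symm hjne)]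
            exact Nat.succ_le_succ (hO' i j hrij hiS' hjS')

end ScheduleLemmas
section SetLemmas

variable {ι : Type*} [DecidableEq ι] {c : ι → ℝ} {r : ι → ι → Prop}

/-- The set of achievable budgets. -/
def budgetsOf (r : ι → ι → Prop) (c : ι → ℝ) (X : Finset ι) : Set ℝ :=
  {b | ∃ S : List ι, IsScheduleOf X S ∧ RespectsOrder r S ∧ listBudget c S = b}

lemma setBudget_eq_sInf (X : Finset ι) : setBudget r c X = sInf (budgetsOf r c X) := rfl

lemma budgetsOf_nonempty (hr : IsPartialOrder ι r) (X : Finset ι) :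
    (budgetsOf r c X).Nonempty := by
  obtain ⟨S, hS, hO⟩ := exists_schedule hr X
  exact ⟨listBudget c S, S, hS, hO, rfl⟩

lemma budgetsOf_finite (X : Finset ι) : (budgetsOf r c X).Finite := by
  refine Set.Finite.subset ((X.toList.permutations.map (listBudget c)).toFinset.finite_toSet) ?_
  rintro b ⟨S, hS, _, rfl⟩
  have hperm : S ~ X.toList := by
    refine List.perm_of_nodup_nodup_toFinset_eq hS.1 X.nodup_toList ?_
    ext a
    simp only [List.mem_toFinset, hS.2 a, Finset.mem_toList]
  simp only [Finset.mem_coe, List.mem_toFinset, List.mem_map]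
  exact ⟨S, List.mem_permutations.2 hperm, rfl⟩

lemma exists_optimal_schedule (hr : IsPartialOrder ι r) (X : Finset ι) :
    ∃ S : List ι, IsScheduleOf X S ∧ RespectsOrder r S ∧ listBudget c S = setBudget r c X :=
  Set.Nonempty.csInf_mem (budgetsOf_nonempty hr X) (budgetsOf_finite X)

lemma setBudget_le_listBudget (X : Finset ι) {S : List ι}
    (hS : IsScheduleOf X S) (hO : RespectsOrder r S) :
    setBudget r c X ≤ listBudget c S :=
  csInf_le (Set.Finite.bddBelow (budgetsOf_finite X)) ⟨S, hS, hO, rfl⟩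

lemma le_setBudget (hr : IsPartialOrder ι r) (X : Finset ι) {x : ℝ}
    (h : ∀ S : List ι, IsScheduleOf X S → RespectsOrder r S → x ≤ listBudget c S) :
    x ≤ setBudget r c X := by
  refine le_csInf (budgetsOf_nonempty hr X) ?_
  rintro b ⟨S, hS, hO, rfl⟩
  exact h S hS hO

lemma listCost_of_schedule {X : Finset ι} {S : List ι} (hS : IsScheduleOf X S) :
    listCost c S = setCost c X := by
  have hX : X = S.toFinset := by
    ext a
    rw [List.mem_toFinset, hS.2 a]
  rw [hX, setCost, List.sum_toFinset _ hS.1, listCost]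

lemma setBudget_nonneg (hr : IsPartialOrder ι r) (X : Finset ι) :
    0 ≤ setBudget r c X := by
  obtain ⟨S, hS, hO, hb⟩ := exists_optimal_schedule (c := c) hr X
  rw [← hb]
  exact listBudget_nonneg c S

lemma setCost_le_setBudget (hr : IsPartialOrder ι r) (X : Finset ι) :
    setCost c X ≤ setBudget r c X := by
  obtain ⟨S, hS, hO, hb⟩ := exists_optimal_schedule (c := c) hr X
  rw [← hb, ← listCost_of_schedule hS]
  exact listCost_le_listBudget c S

lemma setBudget_empty (hr : IsPartialOrder ι r) : setBudget r c (∅ : Finset ι) = 0 := by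
  refine le_antisymm ?_ (setBudget_nonneg hr _)
  have : IsScheduleOf (∅ : Finset ι) ([] : List ι) := ⟨List.nodup_nil, by simp⟩
  exact setBudget_le_listBudget _ this (fun i j _ hi _ => absurd hi List.not_mem_nil)

lemma setReturn_nonpos (hr : IsPartialOrder ι r) (X : Finset ι) :
    setReturn r c X ≤ 0 := by
  rw [setReturn]
  linarith [setCost_le_setBudget (c := c) hr X]

/-- The prefix of a schedule is an ideal. -/
lemma take_toFinset_ideal {X : Finset ι} {S : List ι} (hS : IsScheduleOf X S)
    (hO : RespectsOrder r S) (n : ℕ) :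
    IsIdealIn r X (S.take n).toFinset := by
  constructor
  · intro a ha
    exact (hS.2 a).1 (List.mem_of_mem_take (List.mem_toFinset.1 ha))
  · intro j hj i hi hrij
    have hjt := List.mem_toFinset.1 hj
    have hiS : i ∈ S := (hS.2 i).2 hi
    have hjS : j ∈ S := List.mem_of_mem_take hjt
    have := hO i j hrij hiS hjS
    rw [List.mem_toFinset]
    rw [mem_take_iff_indexOf_lt] at hjt ⊢
    exact ⟨hiS, lt_of_le_of_lt this hjt.2⟩

lemma ideal_union {X A B : Finset ι} (hA : IsIdealIn r X A) (hB : IsIdealIn r X B) :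
    IsIdealIn r X (A ∪ B) := by
  constructor
  · exact Finset.union_subset hA.1 hB.1
  · intro j hj i hi hrij
    rcases Finset.mem_union.1 hj with h | h
    · exact Finset.mem_union_left _ (hA.2 j h i hi hrij)
    · exact Finset.mem_union_right _ (hB.2 j h i hi hrij)

end SetLemmas
section Key2a

variable {ι : Type*} [DecidableEq ι] {c : ι → ℝ} {r : ι → ι → Prop}

lemma listCost_filter_add (c : ι → ℝ) (p : ι → Bool) (L : List ι) :
    listCost c (L.filter p) + listCost c (L.filter (fun x => !(p x))) = listCost c L := by
  induction L with
  | nil => simp [listCost]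
  | cons a T ih =>
    by_cases hpa : p a
    · rw [List.filter_cons_of_pos hpa, List.filter_cons_of_neg (by simp [hpa]),
        listCost_cons, listCost_cons]
      linarith
    · rw [List.filter_cons_of_neg (by simpa using hpa), List.filter_cons_of_pos (by simpa using hpa),
        listCost_cons, listCost_cons]
      linarith

lemma ideal_empty (X : Finset ι) : IsIdealIn r X (∅ : Finset ι) :=
  ⟨Finset.empty_subset _, fun j hj => absurd hj (Finset.notMem_empty j)⟩

lemma ideal_self (X : Finset ι) : IsIdealIn r X X :=
  ⟨le_refl _, fun _ _ i hi _ => hi⟩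

/-- In an irreducible negative block, every ideal has cost at least the total cost. -/
lemma ideal_cost_lower (hr : IsPartialOrder ι r) {J : Finset ι}
    (hJneg : setCost c J < 0)
    (hJirr : ∀ K, IsIdealIn r J K → cbrLE r c J K) :
    ∀ K, IsIdealIn r J K → setCost c J ≤ setCost c K := by
  classical
  set s : Finset (Finset ι) := J.powerset.filter (fun K => IsIdealIn r J K) with hs
  have hmem : ∀ K, K ∈ s ↔ IsIdealIn r J K := by
    intro K
    rw [hs, Finset.mem_filter, Finset.mem_powerset]
    exact ⟨fun h => h.2, fun h => ⟨h.1, h⟩⟩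
  have hsne : s.Nonempty := ⟨∅, (hmem ∅).2 (ideal_empty J)⟩
  obtain ⟨K₀, hK₀s, hK₀min⟩ := Finset.exists_min_image s (setCost c) hsne
  have hK₀ : IsIdealIn r J K₀ := (hmem K₀).1 hK₀s
  suffices h : setCost c J ≤ setCost c K₀ by
    intro K hK
    exact le_trans h (hK₀min K ((hmem K).2 hK))
  by_contra hcon
  push_neg at hcon
  -- from irreducibility, setBudget J < setBudget K₀
  have hb : setBudget r c J < setBudget r c K₀ := by
    rcases hJirr K₀ hK₀ with ⟨_, h⟩ | ⟨_, _, h⟩ | ⟨_, _, hbeq, hret⟩ | ⟨h, _⟩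
    · linarith
    · exact h
    · exfalso
      rw [setReturn, setReturn, hbeq] at hret
      linarith
    · linarith
  obtain ⟨S, hS, hO, hSb⟩ := exists_optimal_schedule (c := c) hr J
  set p : ι → Bool := fun x => decide (x ∈ K₀) with hp
  set SK := S.filter p with hSK
  have hSKsch : IsScheduleOf K₀ SK := isScheduleOf_filter hS hK₀.1
  have hSKo : RespectsOrder r SK := respectsOrder_filter p hS.1 hO
  have hbK₀ : setBudget r c K₀ ≤ listBudget c SK := setBudget_le_listBudget _ hSKsch hSKo
  have hSKpos : 0 < listBudget c SK :=
    lt_of_le_of_lt (setBudget_nonneg (c := c) hr J) (lt_of_lt_of_le hb hbK₀)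
  rcases listBudget_eq_zero_or_take c SK with h0 | ⟨t, ht⟩
  · linarith
  obtain ⟨n, hn⟩ := exists_take_filter p S t
  set P := S.take n with hPdef
  set PF := P.toFinset with hPF
  have hPsch : IsScheduleOf PF P := ⟨hS.1.sublist (List.take_sublist n S), fun j => (List.mem_toFinset).symm⟩
  have hPfsch : IsScheduleOf (PF ∩ K₀) (P.filter p) := by
    constructor
    · exact hPsch.1.filter _
    · intro j
      simp only [List.mem_filter, hp, decide_eq_true_eq, Finset.mem_inter, hPF,
        List.mem_toFinset]
  have hcost1 : listCost c (P.filter p) = setCost c (PF ∩ K₀) := listCost_of_schedule hPfsch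
  have hcost2 : listCost c P = setCost c PF := listCost_of_schedule hPsch
  have hPle : listCost c P ≤ setBudget r c J := by
    rw [← hSb]
    exact listCost_take_le_listBudget c S n
  have hinter : setBudget r c K₀ ≤ setCost c (PF ∩ K₀) := by
    rw [← hcost1, ← hn, ← ht]
    exact hbK₀
  have hPideal : IsIdealIn r J PF := take_toFinset_ideal hS hO n
  have hK₁ : IsIdealIn r J (K₀ ∪ PF) := ideal_union hK₀ hPideal
  have hsum1 : setCost c (K₀ ∪ PF) = setCost c K₀ + setCost c (PF \ K₀) := by
    rw [setCost, setCost, setCost, ← Finset.sum_union Finset.disjoint_sdiff,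
      Finset.union_sdiff_self_eq_union]
  have hsum2 : setCost c (PF ∩ K₀) + setCost c (PF \ K₀) = setCost c PF := by
    rw [setCost, setCost, setCost]
    exact Finset.sum_inter_add_sum_sdiff _ _ _
  have hmin := hK₀min (K₀ ∪ PF) ((hmem _).2 hK₁)
  linarith

end Key2a
section Main2a

variable {ι : Type*} [DecidableEq ι] {c : ι → ℝ} {r : ι → ι → Prop}

/-- Lower bound on the budget of any schedule of `I ∪ J`, given that all ideals of `I`
have nonnegative cost and all ideals of `J` have cost at least `setCost c J ≤ 0`. -/
lemma budget_lower_mixed (hr : IsPartialOrder ι r) {I J : Finset ι} (hdisj : Disjoint I J)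
    (hJle : setCost c J ≤ 0)
    (hJlow : ∀ K, IsIdealIn r J K → setCost c J ≤ setCost c K)
    {S : List ι} (hS : IsScheduleOf (I ∪ J) S) (hO : RespectsOrder r S) :
    setBudget r c I + setCost c J ≤ listBudget c S := by
  classical
  set p : ι → Bool := fun x => decide (x ∈ I) with hp
  set SI := S.filter p with hSI
  have hSIsch : IsScheduleOf I SI := isScheduleOf_filter hS Finset.subset_union_left
  have hSIo : RespectsOrder r SI := respectsOrder_filter p hS.1 hO
  have hbI : setBudget r c I ≤ listBudget c SI := setBudget_le_listBudget _ hSIsch hSIo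
  rcases listBudget_eq_zero_or_take c SI with h0 | ⟨t, ht⟩
  · have h1 : setBudget r c I ≤ 0 := by rw [← h0]; exact hbI
    have := listBudget_nonneg c S
    linarith
  obtain ⟨n, hn⟩ := exists_take_filter p S t
  set P := S.take n with hPdef
  set PF := P.toFinset with hPF
  have hPsch : IsScheduleOf PF P :=
    ⟨hS.1.sublist (List.take_sublist n S), fun j => (List.mem_toFinset).symm⟩
  have hPfsch : IsScheduleOf (PF ∩ I) (P.filter p) := by
    constructor
    · exact hPsch.1.filter _
    · intro j
      simp only [List.mem_filter, hp, decide_eq_true_eq, Finset.mem_inter, hPF,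
        List.mem_toFinset]
  have hPgsch : IsScheduleOf (PF \ I) (P.filter (fun x => !(p x))) := by
    constructor
    · exact hPsch.1.filter _
    · intro j
      simp only [List.mem_filter, hp, Finset.mem_sdiff, hPF, List.mem_toFinset,
        Bool.not_eq_true', decide_eq_false_iff_not]
  have hcost1 : listCost c (P.filter p) = setCost c (PF ∩ I) := listCost_of_schedule hPfsch
  have hcost2 : listCost c (P.filter (fun x => !(p x))) = setCost c (PF \ I) :=
    listCost_of_schedule hPgsch
  have hsplit := listCost_filter_add c p P
  -- PF \ I is an ideal of J
  have hPideal : IsIdealIn r (I ∪ J) PF := take_toFinset_ideal hS hO n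
  have hJideal : IsIdealIn r J (PF \ I) := by
    constructor
    · intro a ha
      rcases Finset.mem_sdiff.1 ha with ⟨haP, haI⟩
      rcases Finset.mem_union.1 (hPideal.1 haP) with h | h
      · exact absurd h haI
      · exact h
    · intro j hj i hi hrij
      have hiU : i ∈ I ∪ J := Finset.mem_union_right _ hi
      have hiP : i ∈ PF := hPideal.2 j (Finset.mem_sdiff.1 hj).1 i hiU hrij
      exact Finset.mem_sdiff.2 ⟨hiP, Finset.disjoint_right.1 hdisj hi⟩
  have hJc : setCost c J ≤ setCost c (PF \ I) := hJlow _ hJideal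
  -- the prefix cost bound
  have hPle : listCost c P ≤ listBudget c S := listCost_take_le_listBudget c S n
  have hIc : setBudget r c I ≤ setCost c (PF ∩ I) := by
    rw [← hcost1, ← hn, ← ht]
    exact hbI
  linarith

end Main2a
section Main2b

variable {ι : Type*} [DecidableEq ι] {c : ι → ℝ} {r : ι → ι → Prop}

lemma singleton_schedule (x : ι) : IsScheduleOf ({x} : Finset ι) [x] :=
  ⟨List.nodup_singleton x, fun j => by simp⟩

lemma singleton_respects (x : ι) : RespectsOrder r [x] := by
  intro i j _ hi hj
  rw [List.mem_singleton] at hi hj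
  subst hi; subst hj; exact le_refl _

/-- Appending a maximal element: upper bound on the set budget. -/
lemma setBudget_insert_max (hr : IsPartialOrder ι r) {X : Finset ι} {x : ι} (hx : x ∈ X)
    (hmax : ∀ y ∈ X, r x y → y = x) :
    setBudget r c X ≤ max (setBudget r c (X.erase x)) (setCost c (X.erase x) + max 0 (c x)) := by
  obtain ⟨S₀, hS₀, hS₀o, hS₀b⟩ := exists_optimal_schedule (c := c) hr (X.erase x)
  have hdisj' : Disjoint (X.erase x) ({x} : Finset ι) := by
    simp [Finset.disjoint_right]
  have hsch : IsScheduleOf X (S₀ ++ [x]) := by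
    have := isScheduleOf_append hdisj' hS₀ (singleton_schedule x)
    rwa [show X.erase x ∪ {x} = X by
      rw [Finset.union_comm, ← Finset.insert_eq, Finset.insert_erase hx]] at this
  have hord : RespectsOrder r (S₀ ++ [x]) := by
    refine respectsOrder_append hdisj' hS₀ (singleton_schedule x) hS₀o (singleton_respects x) ?_
    intro a ha y hy hrya
    rw [Finset.mem_singleton] at hy
    subst hy
    exact (Finset.mem_erase.1 ha).1 ((hmax a (Finset.mem_of_mem_erase ha) hrya).symm ▸ rfl)
  calc setBudget r c X ≤ listBudget c (S₀ ++ [x]) := setBudget_le_listBudget _ hsch hord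
    _ = max (setBudget r c (X.erase x)) (setCost c (X.erase x) + max 0 (c x)) := by
      rw [listBudget_append, hS₀b, listCost_of_schedule hS₀, listBudget_cons,
        listBudget_nil, add_zero]

/-- Main induction for the case where both blocks have nonnegative cost. -/
lemma budget_lower_pos (hr : IsPartialOrder ι r) {I J : Finset ι} (hdisj : Disjoint I J)
    (HI : ∀ A, IsIdealIn r I A → setReturn r c I ≤ setReturn r c A)
    (HJ : ∀ K, IsIdealIn r J K → setReturn r c J ≤ setReturn r c K)
    (hJI : setReturn r c J ≤ setReturn r c I) :
    ∀ (P : List ι) (A K : Finset ι), IsIdealIn r I A → IsIdealIn r J K →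
      IsScheduleOf (A ∪ K) P → RespectsOrder r P →
      setBudget r c A + setBudget r c K + setReturn r c J ≤ listBudget c P := by
  intro P
  induction P using List.reverseRecOn with
  | nil =>
    intro A K hA hK hsch _
    have hAK : A ∪ K = ∅ :=
      Finset.eq_empty_of_forall_notMem (fun j hj => by simpa using (hsch.2 j).2 hj)
    rcases Finset.union_eq_empty.1 hAK with ⟨rfl, rfl⟩
    rw [setBudget_empty hr, listBudget_nil]
    have := setReturn_nonpos (c := c) hr J
    linarith
  | append_singleton Q x ih =>
    intro A K hA hK hsch hord
    have hndQx := hsch.1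
    rw [List.nodup_append] at hndQx
    obtain ⟨hndQ, -, hdisjQx⟩ := hndQx
    have hxQ : x ∉ Q := fun hc => hdisjQx x hc x (List.mem_singleton_self x) rfl
    have hxP : x ∈ Q ++ [x] := List.mem_append_right _ (List.mem_singleton_self x)
    have hxAK : x ∈ A ∪ K := (hsch.2 x).1 hxP
    have hidxx : (Q ++ [x]).idxOf x = Q.length := by
      rw [List.idxOf_append_of_notMem hxQ, List.idxOf_cons_self, Nat.add_zero]
    have hmax : ∀ y ∈ A ∪ K, r x y → y = x := by
      intro y hy hrxy
      by_contra hne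
      have hyP : y ∈ Q ++ [x] := (hsch.2 y).2 hy
      have hyQ : y ∈ Q := by
        rcases List.mem_append.1 hyP with h | h
        · exact h
        · exact absurd (List.mem_singleton.1 h) hne
      have hidx := hord x y hrxy hxP hyP
      rw [hidxx, List.idxOf_append_of_mem hyQ] at hidx
      exact absurd hidx (Nat.not_le.2 (List.idxOf_lt_length_iff.2 hyQ))
    have hQsch : IsScheduleOf ((A ∪ K).erase x) Q := by
      refine ⟨hndQ, fun j => ?_⟩
      rw [Finset.mem_erase]
      constructor
      · intro hj
        refine ⟨fun hc => hxQ (hc ▸ hj), (hsch.2 j).1 (List.mem_append_left _ hj)⟩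
      · rintro ⟨hne, hj⟩
        rcases List.mem_append.1 ((hsch.2 j).2 hj) with h | h
        · exact h
        · exact absurd (List.mem_singleton.1 h) hne
    have hQord : RespectsOrder r Q := by
      intro i j hrij hi hj
      have := hord i j hrij (List.mem_append_left _ hi) (List.mem_append_left _ hj)
      rwa [List.idxOf_append_of_mem hi, List.idxOf_append_of_mem hj] at this
    have hbQ : listBudget c Q ≤ listBudget c (Q ++ [x]) := by
      rw [listBudget_append]
      exact le_max_left _ _
    have hcP : listCost c (Q ++ [x]) ≤ listBudget c (Q ++ [x]) := listCost_le_listBudget c _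
    have hdisjAK : Disjoint A K := Finset.disjoint_of_subset_left hA.1
      (Finset.disjoint_of_subset_right hK.1 hdisj)
    have hcostP : listCost c (Q ++ [x]) = setCost c A + setCost c K := by
      rw [listCost_of_schedule hsch, setCost, Finset.sum_union hdisjAK]
      rfl
    rcases Finset.mem_union.1 hxAK with hxA | hxK
    · -- x ∈ A
      have hxK : x ∉ K := Finset.disjoint_left.1 hdisjAK hxA
      have hA' : IsIdealIn r I (A.erase x) := by
        constructor
        · exact (Finset.erase_subset _ _).trans hA.1
        · intro j hj i hi hrij
          have hjA := Finset.mem_of_mem_erase hj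
          have hiA : i ∈ A := hA.2 j hjA i hi hrij
          refine Finset.mem_erase.2 ⟨fun hc => ?_, hiA⟩
          subst hc
          exact (Finset.mem_erase.1 hj).1 (hmax j (Finset.mem_union_left _ hjA) hrij)
      have hQsch' : IsScheduleOf (A.erase x ∪ K) Q := by
        rwa [Finset.erase_union_distrib, Finset.erase_eq_of_notMem hxK] at hQsch
      have hIH := ih (A.erase x) K hA' hK hQsch' hQord
      have hkey := setBudget_insert_max (c := c) hr hxA
        (fun y hy hrxy => hmax y (Finset.mem_union_left _ hy) hrxy)
      have hcA' : setCost c (A.erase x) + c x = setCost c A := by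
        rw [setCost, setCost]; exact Finset.sum_erase_add _ _ hxA
      have hcA'le : setCost c (A.erase x) ≤ setBudget r c (A.erase x) :=
        setCost_le_setBudget hr _
      have hKret : setReturn r c J ≤ setCost c K - setBudget r c K := by
        have h := HJ K hK
        rwa [show setReturn r c K = setCost c K - setBudget r c K from rfl] at h
      rcases le_max_iff.1 hkey with h | h
      · linarith
      · rcases le_or_gt (c x) 0 with hcx | hcx
        · rw [max_eq_left hcx] at h
          linarith
        · rw [max_eq_right hcx.le] at h
          linarith
    · -- x ∈ K
      have hxA : x ∉ A := fun hc => Finset.disjoint_left.1 hdisjAK hc hxK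
      have hK' : IsIdealIn r J (K.erase x) := by
        constructor
        · exact (Finset.erase_subset _ _).trans hK.1
        · intro j hj i hi hrij
          have hjK := Finset.mem_of_mem_erase hj
          have hiK : i ∈ K := hK.2 j hjK i hi hrij
          refine Finset.mem_erase.2 ⟨fun hc => ?_, hiK⟩
          subst hc
          exact (Finset.mem_erase.1 hj).1 (hmax j (Finset.mem_union_right _ hjK) hrij)
      have hQsch' : IsScheduleOf (A ∪ K.erase x) Q := by
        rwa [Finset.erase_union_distrib, Finset.erase_eq_of_notMem hxA] at hQsch
      have hIH := ih A (K.erase x) hA hK' hQsch' hQord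
      have hkey := setBudget_insert_max (c := c) hr hxK
        (fun y hy hrxy => hmax y (Finset.mem_union_right _ hy) hrxy)
      have hcK' : setCost c (K.erase x) + c x = setCost c K := by
        rw [setCost, setCost]; exact Finset.sum_erase_add _ _ hxK
      have hcK'le : setCost c (K.erase x) ≤ setBudget r c (K.erase x) :=
        setCost_le_setBudget hr _
      have hAret : setReturn r c J ≤ setCost c A - setBudget r c A := by
        have h := le_trans hJI (HI A hA)
        rwa [show setReturn r c A = setCost c A - setBudget r c A from rfl] at h
      rcases le_max_iff.1 hkey with h | h
      · linarith
      · rcases le_or_gt (c x) 0 with hcx | hcx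
        · rw [max_eq_left hcx] at h
          linarith
        · rw [max_eq_right hcx.le] at h
          linarith

end Main2b

theorem merge_consecutive_blocks (r : ι → ι → Prop) (hr : IsPartialOrder ι r)
    (c : ι → ℝ) (N I J : Finset ι)
    (hIdeal : IsIdealIn r N I) (hIirr : ∀ K, IsIdealIn r I K → cbrLE r c I K)
    (hJIdeal : IsIdealIn r (N \ I) J) (hJirr : ∀ K, IsIdealIn r J K → cbrLE r c J K)
    (hgt : cbrLE r c J I ∧ ¬ cbrLE r c I J) :
    cbrLE r c (I ∪ J) I := by
  obtain ⟨hle, -⟩ := hgt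
  have hdisj : Disjoint I J := by
    rw [Finset.disjoint_right]
    intro j hj
    exact (Finset.mem_sdiff.1 (hJIdeal.1 hj)).2
  have hcross : ∀ i ∈ I, ∀ j ∈ J, ¬ r j i := by
    intro i hi j hj hrji
    have hjN := Finset.mem_sdiff.1 (hJIdeal.1 hj)
    exact hjN.2 (hIdeal.2 i hi j hjN.1 hrji)
  have hcU : setCost c (I ∪ J) = setCost c I + setCost c J := by
    rw [setCost, setCost, setCost, Finset.sum_union hdisj]
  have hretI : setReturn r c I = setCost c I - setBudget r c I := rfl
  have hretU : setReturn r c (I ∪ J) = setCost c (I ∪ J) - setBudget r c (I ∪ J) := rfl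
  have hretJ : setReturn r c J = setCost c J - setBudget r c J := rfl
  rcases lt_or_ge (setCost c I) 0 with hcI | hcI
  · -- Case 1 : c I < 0; then c J < 0 and b J ≤ b I
    have hKey : setCost c J < 0 ∧ setBudget r c J ≤ setBudget r c I ∧
        (setBudget r c (I ∪ J) = setBudget r c I → setReturn r c J ≤ setReturn r c I → True) := by
      exact ⟨by rcases hle with ⟨h1, h2⟩ | ⟨h1, h2, h3⟩ | ⟨h1, h2, h3, h4⟩ | ⟨h1, h2⟩ <;>
        first | exact h1 | linarith, by
        rcases hle with ⟨h1, h2⟩ | ⟨h1, h2, h3⟩ | ⟨h1, h2, h3, h4⟩ | ⟨h1, h2⟩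
        · linarith
        · exact h3.le
        · exact h3.le
        · linarith, fun _ _ => trivial⟩
    obtain ⟨hcJ, hbJI, -⟩ := hKey
    -- concatenation gives b (I ∪ J) ≤ b I
    have hbU : setBudget r c (I ∪ J) ≤ setBudget r c I := by
      obtain ⟨SI, hSI, hSIo, hSIb⟩ := exists_optimal_schedule (c := c) hr I
      obtain ⟨SJ, hSJ, hSJo, hSJb⟩ := exists_optimal_schedule (c := c) hr J
      have hsch := isScheduleOf_append hdisj hSI hSJ
      have hord := respectsOrder_append hdisj hSI hSJ hSIo hSJo hcross
      have := setBudget_le_listBudget (c := c) _ hsch hord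
      rw [listBudget_append, hSIb, hSJb, listCost_of_schedule hSI] at this
      refine le_trans this (max_le (le_refl _) ?_)
      linarith
    have hcUneg : setCost c (I ∪ J) < 0 := by rw [hcU]; linarith
    rcases lt_or_eq_of_le hbU with hlt | heq
    · exact Or.inr (Or.inl ⟨hcUneg, hcI, hlt⟩)
    · refine Or.inr (Or.inr (Or.inl ⟨hcUneg, hcI, heq, ?_⟩))
      rw [hretU, hretI, heq, hcU]
      linarith
  · -- Case 2 : 0 ≤ c I
    have HI : ∀ A, IsIdealIn r I A → setReturn r c I ≤ setReturn r c A := by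
      intro A hA
      rcases hIirr A hA with ⟨h1, h2⟩ | ⟨h1, h2, h3⟩ | ⟨h1, h2, h3, h4⟩ | ⟨h1, h2, h3⟩
      · linarith
      · linarith
      · linarith
      · exact h3
    rcases lt_or_ge (setCost c J) 0 with hcJ | hcJ
    · -- Case 2a : c J < 0
      rcases lt_or_ge (setCost c (I ∪ J)) 0 with hcUneg | hcUpos
      · exact Or.inl ⟨hcUneg, hcI⟩
      · have hJlow := ideal_cost_lower hr hcJ hJirr
        have hbU : setBudget r c I + setCost c J ≤ setBudget r c (I ∪ J) :=
          le_setBudget hr _ (fun S hS hO => budget_lower_mixed hr hdisj hcJ.le hJlow hS hO)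
        refine Or.inr (Or.inr (Or.inr ⟨hcUpos, hcI, ?_⟩))
        rw [hretU, hretI, hcU]
        linarith
    · -- Case 2b : 0 ≤ c J
      have HJ : ∀ K, IsIdealIn r J K → setReturn r c J ≤ setReturn r c K := by
        intro K hK
        rcases hJirr K hK with ⟨h1, h2⟩ | ⟨h1, h2, h3⟩ | ⟨h1, h2, h3, h4⟩ | ⟨h1, h2, h3⟩
        · linarith
        · linarith
        · linarith
        · exact h3
      have hJI : setReturn r c J ≤ setReturn r c I := by
        rcases hle with ⟨h1, h2⟩ | ⟨h1, h2, h3⟩ | ⟨h1, h2, h3, h4⟩ | ⟨h1, h2, h3⟩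
        · linarith
        · linarith
        · linarith
        · exact h3
      have hbU : setBudget r c I + setBudget r c J + setReturn r c J ≤ setBudget r c (I ∪ J) :=
        le_setBudget hr _ (fun S hS hO =>
          budget_lower_pos hr hdisj HI HJ hJI S I J (ideal_self I) (ideal_self J) hS hO)
      have hcUpos : 0 ≤ setCost c (I ∪ J) := by rw [hcU]; linarith
      refine Or.inr (Or.inr (Or.inr ⟨hcUpos, hcI, ?_⟩))
      rw [hretU, hretI, hcU]
      rw [hretJ] at hbU
      linarith
end

section
/- Let S = S₁ ⊕ … ⊕ S_k be a schedule in increasing irreducible structure for (N, ⊴, c) with corresponding irreducible intervals I₁,…,I_k. Then there exists l ∈ {0,…,k} such that I₁ ∪ … ∪ I_l attains the minimum of r(I) over all ideals I of ⊴. -/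
open List

variable {ι : Type*} [DecidableEq ι]

set_option linter.unusedSectionVars false
namespace PMR
open List

variable {ι : Type*} [DecidableEq ι] {r : ι → ι → Prop} {c : ι → ℝ}

/-! ### Section A: list toolkit -/

lemma listCost_nil : listCost c ([] : List ι) = 0 := rfl

lemma listCost_cons (a : ι) (S : List ι) : listCost c (a :: S) = c a + listCost c S := by
  simp [listCost]

lemma listCost_append (A B : List ι) :
    listCost c (A ++ B) = listCost c A + listCost c B := by
  simp [listCost]

lemma listBudget_nil : listBudget c ([] : List ι) = 0 := rfl

lemma listBudget_cons (a : ι) (S : List ι) :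
    listBudget c (a :: S) = max 0 (c a + listBudget c S) := rfl

lemma listBudget_nonneg (S : List ι) : 0 ≤ listBudget c S := by
  cases S with
  | nil => simp [listBudget]
  | cons a T => exact le_max_left _ _

lemma listCost_take_le (S : List ι) : ∀ t, listCost c (S.take t) ≤ listBudget c S := by
  induction S with
  | nil => intro t; simp [listCost, listBudget]
  | cons a T ih =>
    intro t
    cases t with
    | zero => simpa [listCost] using listBudget_nonneg (c := c) (a :: T)
    | succ u =>
      rw [List.take_succ_cons, listCost_cons, listBudget_cons]
      have h := ih u
      have : c a + listCost c (T.take u) ≤ c a + listBudget c T := by linarith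
      exact le_trans this (le_max_right _ _)

lemma listCost_le_listBudget (S : List ι) : listCost c S ≤ listBudget c S := by
  have := listCost_take_le (c := c) S S.length
  simpa [List.take_length] using this

lemma listBudget_le_of {S : List ι} {B : ℝ} (hB : 0 ≤ B)
    (h : ∀ t, listCost c (S.take t) ≤ B) : listBudget c S ≤ B := by
  induction S generalizing B with
  | nil => simpa [listBudget]
  | cons a T ih =>
    rw [listBudget_cons]
    refine max_le hB ?_
    have h1 : c a ≤ B := by
      have := h 1
      simpa [List.take_succ_cons, listCost] using this
    have h2 : listBudget c T ≤ B - c a := by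
      refine ih (by linarith) ?_
      intro t
      have := h (t + 1)
      rw [List.take_succ_cons, listCost_cons] at this
      linarith
    linarith

lemma exists_take_of_le_listBudget {S : List ι} {b : ℝ} (hb : 0 < b)
    (h : b ≤ listBudget c S) : ∃ t, b ≤ listCost c (S.take t) := by
  induction S generalizing b with
  | nil => exfalso; rw [listBudget_nil] at h; linarith
  | cons a T ih =>
    rw [listBudget_cons] at h
    have hX : b ≤ c a + listBudget c T := by
      rcases le_max_iff.mp h with h0 | hX
      · linarith
      · exact hX
    rcases le_or_gt b (c a) with hba | hba
    · exact ⟨1, by simpa [List.take_succ_cons, listCost] using hba⟩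
    · obtain ⟨t, ht⟩ := ih (b := b - c a) (by linarith) (by linarith)
      exact ⟨t + 1, by rw [List.take_succ_cons, listCost_cons]; linarith⟩

lemma listBudget_append (A B : List ι) :
    listBudget c (A ++ B) = max (listBudget c A) (listCost c A + listBudget c B) := by
  induction A with
  | nil =>
    rw [List.nil_append, listBudget_nil, listCost_nil, zero_add]
    exact (max_eq_right (listBudget_nonneg B)).symm
  | cons a T ih =>
    rw [List.cons_append, listBudget_cons, listBudget_cons, ih, listCost_cons,
      ← max_add_add_left, ← max_assoc, ← add_assoc]

lemma filter_take_comm (p : ι → Bool) (S : List ι) :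
    ∀ u, ∃ t, (S.filter p).take u = (S.take t).filter p := by
  induction S with
  | nil => intro u; exact ⟨0, by simp⟩
  | cons a T ih =>
    intro u
    by_cases hp : p a
    · cases u with
      | zero => exact ⟨0, by simp⟩
      | succ v =>
        obtain ⟨t, ht⟩ := ih v
        refine ⟨t + 1, ?_⟩
        rw [List.take_succ_cons, List.filter_cons_of_pos hp, List.filter_cons_of_pos hp,
          List.take_succ_cons, ht]
    · obtain ⟨t, ht⟩ := ih u
      refine ⟨t + 1, ?_⟩
      rw [List.take_succ_cons, List.filter_cons_of_neg (by simpa using hp),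
        List.filter_cons_of_neg (by simpa using hp), ht]

lemma take_filter_comm (p : ι → Bool) (S : List ι) :
    ∀ t, ∃ u, (S.take t).filter p = (S.filter p).take u := by
  induction S with
  | nil => intro t; exact ⟨0, by simp⟩
  | cons a T ih =>
    intro t
    cases t with
    | zero => exact ⟨0, by simp⟩
    | succ v =>
      obtain ⟨u, hu⟩ := ih v
      by_cases hp : p a
      · refine ⟨u + 1, ?_⟩
        rw [List.take_succ_cons, List.filter_cons_of_pos hp, List.filter_cons_of_pos hp,
          List.take_succ_cons, hu]
      · refine ⟨u, ?_⟩
        rw [List.take_succ_cons, List.filter_cons_of_neg (by simpa using hp),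
          List.filter_cons_of_neg (by simpa using hp), hu]

/-- Downward-closed prefixes: the working form of `RespectsOrder`. -/
def DC (r : ι → ι → Prop) (S : List ι) : Prop :=
  ∀ t, ∀ y ∈ S.take t, ∀ x ∈ S, r x y → x ∈ S.take t

lemma mem_take_of_indexOf_lt {S : List ι} {x : ι} :
    ∀ {t : ℕ}, x ∈ S → S.idxOf x < t → x ∈ S.take t := by
  induction S with
  | nil => intro t hx; simp at hx
  | cons a T ih =>
    intro t hx hidx
    by_cases hxa : x = a
    · subst hxa
      cases t with
      | zero => simp [List.idxOf_cons_self] at hidx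
      | succ u => exact List.mem_cons_self
    · rw [List.mem_cons] at hx
      rcases hx with rfl | hx
      · exact absurd rfl hxa
      · rw [List.idxOf_cons_ne _ (Ne.symm hxa)] at hidx
        cases t with
        | zero => omega
        | succ u =>
          rw [List.take_succ_cons]
          exact List.mem_cons_of_mem _ (ih hx (by omega))

lemma indexOf_lt_of_mem_take {S : List ι} {x : ι} :
    ∀ {t : ℕ}, x ∈ S.take t → S.idxOf x < t := by
  induction S with
  | nil => intro t hx; simp at hx
  | cons a T ih =>
    intro t hx
    cases t with
    | zero => simp at hx
    | succ u =>
      rw [List.take_succ_cons, List.mem_cons] at hx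
      by_cases hxa : x = a
      · subst hxa; rw [List.idxOf_cons_self]; omega
      · rcases hx with rfl | hx
        · exact absurd rfl hxa
        · rw [List.idxOf_cons_ne _ (Ne.symm hxa)]
          have := ih hx
          omega

lemma respectsOrder_iff_DC {S : List ι} : RespectsOrder r S ↔ DC r S := by
  constructor
  · intro h t y hy x hx hr
    have hyS : y ∈ S := List.take_subset _ _ hy
    have h1 := h x y hr hx hyS
    exact mem_take_of_indexOf_lt hx (lt_of_le_of_lt h1 (indexOf_lt_of_mem_take hy))
  · intro h x y hr hx hy
    by_contra hlt
    push_neg at hlt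
    have hy' : y ∈ S.take (S.idxOf y + 1) :=
      mem_take_of_indexOf_lt hy (Nat.lt_succ_self _)
    have hx' := h _ y hy' x hx hr
    have := indexOf_lt_of_mem_take hx'
    omega

lemma DC.take {S : List ι} (h : DC r S) (t₀ : ℕ) : DC r (S.take t₀) := by
  intro t y hy x hx hr
  rw [List.take_take] at hy ⊢
  exact h (min t t₀) y hy x (List.take_subset _ _ hx) hr

lemma DC.filter {S : List ι} (h : DC r S) (p : ι → Bool) : DC r (S.filter p) := by
  intro t y hy x hx hr
  obtain ⟨t', ht'⟩ := filter_take_comm p S t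
  have hxS : x ∈ S := (List.mem_filter.mp hx).1
  have hxp : p x = true := (List.mem_filter.mp hx).2
  rw [ht'] at hy ⊢
  rw [List.mem_filter] at hy ⊢
  exact ⟨h t' y hy.1 x hxS hr, hxp⟩

lemma DC.drop {S : List ι} (hS : S.Nodup) (h : DC r S) (d : ℕ) : DC r (S.drop d) := by
  intro t y hy x hx hr
  have key : S.take (d + t) = S.take d ++ (S.drop d).take t := List.take_add
  have hyS : y ∈ S.take (d + t) := by rw [key]; exact List.mem_append_right _ hy
  have hx' : x ∈ S := List.drop_subset _ _ hx
  have hxt : x ∈ S.take (d + t) := h (d + t) y hyS x hx' hr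
  rw [key] at hxt
  rcases List.mem_append.mp hxt with h1 | h1
  · exfalso
    have hnd : (S.take d ++ S.drop d).Nodup := by rw [List.take_append_drop]; exact hS
    rw [List.nodup_append] at hnd
    exact hnd.2.2 x h1 x hx rfl
  · exact h1

lemma DC.append {A B : List ι} (hA : DC r A) (hB : DC r B)
    (hAB : ∀ x ∈ B, ∀ y ∈ A, ¬r x y) : DC r (A ++ B) := by
  intro t y hy x hx hr
  rw [List.take_append] at hy ⊢
  rcases List.mem_append.mp hy with hy1 | hy2
  · rcases List.mem_append.mp hx with hx1 | hx2
    · exact List.mem_append_left _ (hA t y hy1 x hx1 hr)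
    · exact absurd hr (hAB x hx2 y (List.take_subset _ _ hy1))
  · by_cases hts : t ≤ A.length
    · exfalso
      have : t - A.length = 0 := by omega
      rw [this] at hy2
      simp at hy2
    · rcases List.mem_append.mp hx with hx1 | hx2
      · refine List.mem_append_left _ ?_
        rw [List.take_of_length_le (by omega)]
        exact hx1
      · exact List.mem_append_right _ (hB _ y hy2 x hx2 hr)

lemma DC_nil : DC r ([] : List ι) := by intro t y hy; simp at hy

lemma DC_singleton (a : ι) : DC r [a] := by
  intro t y hy x hx hr
  cases t with
  | zero => simp at hy
  | succ u =>
    have hx' : x = a := by simpa using hx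
    have htake : ([a] : List ι).take (u + 1) = [a] := List.take_of_length_le (by simp)
    rw [htake, hx']
    exact List.mem_singleton_self a

lemma IsScheduleOf.toFinset_eq {X : Finset ι} {S : List ι} (h : IsScheduleOf X S) :
    S.toFinset = X := by
  ext a
  rw [List.mem_toFinset]
  exact h.2 a

lemma listCost_eq_setCost {S : List ι} (h : S.Nodup) :
    listCost c S = setCost c S.toFinset := by
  rw [setCost, List.sum_toFinset _ h]; rfl

lemma listCost_of_sched {X : Finset ι} {S : List ι} (h : IsScheduleOf X S) :
    listCost c S = setCost c X := by
  rw [listCost_eq_setCost h.1, IsScheduleOf.toFinset_eq h]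

lemma listCost_filter_or (p q : ι → Bool) (S : List ι)
    (h : ∀ x ∈ S, ¬(p x = true ∧ q x = true)) :
    listCost c (S.filter fun x => p x || q x)
      = listCost c (S.filter p) + listCost c (S.filter q) := by
  induction S with
  | nil => simp [listCost]
  | cons a T ih =>
    have hT : ∀ x ∈ T, ¬(p x = true ∧ q x = true) :=
      fun x hx => h x (List.mem_cons_of_mem _ hx)
    have hih := ih hT
    by_cases hp : p a = true <;> by_cases hq : q a = true
    · exact absurd ⟨hp, hq⟩ (h a (List.mem_cons_self))
    · rw [List.filter_cons_of_pos (by simp [hp]), List.filter_cons_of_pos hp,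
        List.filter_cons_of_neg (by simpa using hq), listCost_cons, listCost_cons, hih]
      ring
    · rw [List.filter_cons_of_pos (by simp [hq]), List.filter_cons_of_neg (by simpa using hp),
        List.filter_cons_of_pos hq, listCost_cons, listCost_cons, hih]
      ring
    · rw [List.filter_cons_of_neg (by simp [hp, hq]), List.filter_cons_of_neg (by simpa using hp),
        List.filter_cons_of_neg (by simpa using hq), hih]


/-! ### Section B: setBudget basics -/

def budSet (r : ι → ι → Prop) (c : ι → ℝ) (X : Finset ι) : Set ℝ :=
  {b | ∃ S : List ι, IsScheduleOf X S ∧ RespectsOrder r S ∧ listBudget c S = b}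

lemma setBudget_eq_inf (X : Finset ι) : setBudget r c X = sInf (budSet r c X) := rfl

lemma budSet_bddBelow (X : Finset ι) : BddBelow (budSet r c X) := by
  refine ⟨0, ?_⟩
  rintro b ⟨S, _, _, rfl⟩
  exact listBudget_nonneg S

lemma budSet_finite (X : Finset ι) : (budSet r c X).Finite := by
  have hsub : budSet r c X ⊆ (fun S => listBudget c S) '' {S : List ι | S ~ X.toList} := by
    rintro b ⟨S, hS, _, rfl⟩
    refine ⟨S, ?_, rfl⟩
    refine (List.perm_ext_iff_of_nodup hS.1 X.nodup_toList).mpr ?_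
    intro a
    rw [hS.2 a, Finset.mem_toList]
  refine Set.Finite.subset (Set.Finite.image _ ?_) hsub
  have h2 : {S : List ι | S ~ X.toList} ⊆ {S | S ∈ X.toList.permutations} :=
    fun S h => List.mem_permutations.mpr h
  exact Set.Finite.subset (X.toList.permutations.finite_toSet) h2

lemma exists_minimal_elt (hr : IsPartialOrder ι r) :
    ∀ (n : ℕ) (X : Finset ι), X.card ≤ n → X.Nonempty →
      ∃ m ∈ X, ∀ x ∈ X, r x m → x = m := by
  haveI := hr
  intro n
  induction n with
  | zero =>
    intro X hc hne
    exfalso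
    obtain ⟨a, ha⟩ := hne
    have := Finset.card_pos.mpr ⟨a, ha⟩
    omega
  | succ n ih =>
    intro X hc hne
    classical
    obtain ⟨a, ha⟩ := hne
    set Z := X.filter (fun x => r x a ∧ x ≠ a) with hZdef
    by_cases hz : Z.Nonempty
    · have hsub : Z ⊆ X.erase a := by
        intro x hx
        rw [Finset.mem_filter] at hx
        exact Finset.mem_erase.mpr ⟨hx.2.2, hx.1⟩
      have hcz : Z.card ≤ n := by
        have h1 := Finset.card_le_card hsub
        have h2 := Finset.card_erase_of_mem ha
        omega
      obtain ⟨m, hmZ, hmin⟩ := ih Z hcz hz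
      have hma : r m a ∧ m ≠ a := by
        have := Finset.mem_filter.mp hmZ
        simpa using this.2
      refine ⟨m, (Finset.mem_filter.mp hmZ).1, ?_⟩
      intro x hx hxm
      by_contra hne'
      have hxa : r x a := _root_.trans hxm hma.1
      have hxZ : x ∈ Z := by
        rw [Finset.mem_filter]
        refine ⟨hx, hxa, ?_⟩
        rintro rfl
        exact hne' (antisymm hma.1 hxm).symm
      exact hne' (hmin x hxZ hxm)
    · refine ⟨a, ha, ?_⟩
      intro x hx hxa
      by_contra hne'
      exact hz ⟨x, by rw [Finset.mem_filter]; exact ⟨hx, by simp [hxa, hne']⟩⟩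

lemma exists_schedule_aux (hr : IsPartialOrder ι r) :
    ∀ (n : ℕ) (X : Finset ι), X.card ≤ n → ∃ S, IsScheduleOf X S ∧ DC r S := by
  intro n
  induction n with
  | zero =>
    intro X hc
    have : X = ∅ := Finset.card_eq_zero.mp (by omega)
    subst this
    exact ⟨[], ⟨List.nodup_nil, by simp⟩, DC_nil⟩
  | succ n ih =>
    intro X hc
    rcases X.eq_empty_or_nonempty with rfl | hne
    · exact ⟨[], ⟨List.nodup_nil, by simp⟩, DC_nil⟩
    · obtain ⟨m, hm, hmin⟩ := exists_minimal_elt hr X.card X (le_refl _) hne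
      have hcard : (X.erase m).card ≤ n := by
        have := Finset.card_erase_of_mem hm
        have := Finset.card_pos.mpr ⟨m, hm⟩
        omega
      obtain ⟨S', hS', hDC'⟩ := ih (X.erase m) hcard
      refine ⟨m :: S', ⟨?_, ?_⟩, ?_⟩
      · refine List.Nodup.cons ?_ hS'.1
        intro hmem
        exact (Finset.mem_erase.mp ((hS'.2 m).mp hmem)).1 rfl
      · intro j
        rw [List.mem_cons, hS'.2 j, Finset.mem_erase]
        constructor
        · rintro (rfl | ⟨_, hj⟩)
          · exact hm
          · exact hj
        · intro hj
          by_cases hjm : j = m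
          · exact Or.inl hjm
          · exact Or.inr ⟨hjm, hj⟩
      · have : m :: S' = [m] ++ S' := rfl
        rw [this]
        refine DC.append (DC_singleton m) hDC' ?_
        intro x hx y hy hrxy
        have hy' : y = m := by simpa using hy
        rw [hy'] at hrxy
        have hxX : x ∈ X := (Finset.mem_erase.mp ((hS'.2 x).mp hx)).2
        have hxm : x ≠ m := (Finset.mem_erase.mp ((hS'.2 x).mp hx)).1
        exact hxm (hmin x hxX hrxy)

lemma budSet_nonempty (hr : IsPartialOrder ι r) (X : Finset ι) :
    (budSet r c X).Nonempty := by
  obtain ⟨S, hS, hDC⟩ := exists_schedule_aux hr X.card X (le_refl _)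
  exact ⟨listBudget c S, S, hS, respectsOrder_iff_DC.mpr hDC, rfl⟩

lemma setBudget_mem (hr : IsPartialOrder ι r) (X : Finset ι) :
    setBudget r c X ∈ budSet r c X :=
  (budSet_nonempty hr X).csInf_mem (budSet_finite X)

lemma exists_opt_schedule (hr : IsPartialOrder ι r) (X : Finset ι) :
    ∃ S, IsScheduleOf X S ∧ DC r S ∧ listBudget c S = setBudget r c X := by
  obtain ⟨S, h1, h2, h3⟩ := setBudget_mem (r := r) (c := c) hr X
  exact ⟨S, h1, respectsOrder_iff_DC.mp h2, h3⟩

lemma setBudget_le {X : Finset ι} {S : List ι} (h1 : IsScheduleOf X S) (h2 : DC r S) :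
    setBudget r c X ≤ listBudget c S :=
  csInf_le (budSet_bddBelow X) ⟨S, h1, respectsOrder_iff_DC.mpr h2, rfl⟩

lemma setBudget_nonneg (hr : IsPartialOrder ι r) (X : Finset ι) :
    0 ≤ setBudget r c X := by
  obtain ⟨S, _, _, h3⟩ := exists_opt_schedule (r := r) (c := c) hr X
  rw [← h3]
  exact listBudget_nonneg S

lemma setCost_le_setBudget (hr : IsPartialOrder ι r) (X : Finset ι) :
    setCost c X ≤ setBudget r c X := by
  obtain ⟨S, h1, _, h3⟩ := exists_opt_schedule (r := r) (c := c) hr X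
  rw [← h3, ← listCost_of_sched h1]
  exact listCost_le_listBudget S

/-! ### Section C: ideals -/

lemma ideal_self (I : Finset ι) : IsIdealIn r I I :=
  ⟨Finset.Subset.refl I, fun _ _ i hi _ => hi⟩

lemma ideal_empty (I : Finset ι) : IsIdealIn r I ∅ :=
  ⟨Finset.empty_subset I, fun j hj => by simp at hj⟩

lemma ideal_union {I J K : Finset ι} (h1 : IsIdealIn r I J) (h2 : IsIdealIn r I K) :
    IsIdealIn r I (J ∪ K) := by
  refine ⟨Finset.union_subset h1.1 h2.1, ?_⟩
  intro j hj x hx hrx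
  rcases Finset.mem_union.mp hj with hj | hj
  · exact Finset.mem_union_left _ (h1.2 j hj x hx hrx)
  · exact Finset.mem_union_right _ (h2.2 j hj x hx hrx)

lemma ideal_inter_block {M B J : Finset ι} (hB : B ⊆ M) (hJ : IsIdealIn r M J) :
    IsIdealIn r B (J ∩ B) := by
  refine ⟨Finset.inter_subset_right, ?_⟩
  intro j hj x hx hrx
  rw [Finset.mem_inter] at hj ⊢
  exact ⟨hJ.2 j hj.1 x (hB hx) hrx, hx⟩

lemma ideal_trans {N I J : Finset ι} (h1 : IsIdealIn r N I) (h2 : IsIdealIn r I J) :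
    IsIdealIn r N J := by
  refine ⟨h2.1.trans h1.1, ?_⟩
  intro j hj x hx hrx
  exact h2.2 j hj x (h1.2 j (h2.1 hj) x hx hrx) hrx

lemma sched_take_ideal {M : Finset ι} {T : List ι} (hT : IsScheduleOf M T) (h : DC r T)
    (t : ℕ) : IsIdealIn r M (T.take t).toFinset := by
  constructor
  · intro x hx
    rw [List.mem_toFinset] at hx
    exact (hT.2 x).mp (List.take_subset _ _ hx)
  · intro y hy x hxM hrx
    rw [List.mem_toFinset] at hy ⊢
    exact h t y hy x ((hT.2 x).mpr hxM) hrx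

lemma sched_filter {X : Finset ι} {T : List ι} (hT : IsScheduleOf X T) (h : DC r T)
    (B : Finset ι) :
    IsScheduleOf (X ∩ B) (T.filter (fun x => decide (x ∈ B))) ∧
      DC r (T.filter (fun x => decide (x ∈ B))) := by
  refine ⟨⟨hT.1.filter _, ?_⟩, h.filter _⟩
  intro j
  rw [List.mem_filter, Finset.mem_inter, hT.2 j]
  simp

/-! ### Section D: consequences of irreducibility (L1 and L2) -/

lemma toFinset_filter_mem (S : List ι) (J : Finset ι) :
    (S.filter (fun x => decide (x ∈ J))).toFinset = S.toFinset ∩ J := by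
  ext a
  simp [List.mem_filter]

lemma nodup_take {S : List ι} (h : S.Nodup) (t : ℕ) : (S.take t).Nodup :=
  List.Nodup.sublist (List.take_sublist t S) h

lemma setCost_union_inter (A J : Finset ι) :
    setCost c (A ∪ J) + setCost c (A ∩ J) = setCost c A + setCost c J := by
  simp only [setCost]
  exact Finset.sum_union_inter

lemma setCost_inter_eq (A J : Finset ι) :
    setCost c (A ∩ J) = setCost c A + setCost c J - setCost c (A ∪ J) := by
  have h := setCost_union_inter (c := c) A J
  linarith

/-- restricted-budget bound: the budget of an ideal `J` is at most `β` provided each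
prefix of an optimal-ish schedule intersected with `J` costs at most `β`. -/
lemma restricted_budget_le {I J : Finset ι} {S₀ : List ι}
    (hS : IsScheduleOf I S₀) (hDC : DC r S₀) (hJ : J ⊆ I)
    {β : ℝ} (hβ : 0 ≤ β)
    (hbound : ∀ t, setCost c ((S₀.take t).toFinset ∩ J) ≤ β) :
    setBudget r c J ≤ β := by
  have hfilt := sched_filter (r := r) hS hDC J
  have hIJ : I ∩ J = J := Finset.inter_eq_right.mpr hJ
  rw [hIJ] at hfilt
  refine le_trans (setBudget_le hfilt.1 hfilt.2) ?_
  refine listBudget_le_of hβ ?_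
  intro u
  obtain ⟨t, ht⟩ := filter_take_comm (fun x => decide (x ∈ J)) S₀ u
  rw [ht, listCost_eq_setCost ((nodup_take hS.1 t).filter _), toFinset_filter_mem]
  exact hbound t

lemma cost_take_eq {I : Finset ι} {S₀ : List ι} (hS : IsScheduleOf I S₀) (t : ℕ) :
    listCost c (S₀.take t) = setCost c (S₀.take t).toFinset :=
  listCost_eq_setCost (nodup_take hS.1 t)

section Irr
variable (hr : IsPartialOrder ι r) {I : Finset ι}
  (hirr : ∀ J, IsIdealIn r I J → cbrLE r c I J)

include hr hirr

/-- L1: every ideal of an irreducible block costs at least `min 0 (cost I)`. -/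
lemma ideal_cost_ge : ∀ J, IsIdealIn r I J → min 0 (setCost c I) ≤ setCost c J := by
  classical
  rcases le_or_gt 0 (setCost c I) with hc | hc
  · intro J hJ
    have h := hirr J hJ
    rcases h with ⟨h1, _⟩ | ⟨h1, _⟩ | ⟨h1, _⟩ | ⟨_, h2, _⟩
    · linarith
    · linarith
    · linarith
    · rw [min_eq_left hc]; exact h2
  · -- negative block
    set 𝒥 := I.powerset.filter (fun J => IsIdealIn r I J) with h𝒥
    have hmem : ∀ J, J ∈ 𝒥 ↔ IsIdealIn r I J := by
      intro J
      rw [h𝒥, Finset.mem_filter, Finset.mem_powerset]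
      constructor
      · exact fun h => h.2
      · exact fun h => ⟨h.1, h⟩
    have hne : 𝒥.Nonempty := ⟨∅, (hmem ∅).mpr (ideal_empty I)⟩
    obtain ⟨Jm, hJm, hmin⟩ := Finset.exists_min_image 𝒥 (setCost c) hne
    have hJmIdeal : IsIdealIn r I Jm := (hmem Jm).mp hJm
    have hJmle : setCost c Jm ≤ setCost c I := hmin I ((hmem I).mpr (ideal_self I))
    -- budget of Jm is at most budget of I
    obtain ⟨S₀, hS₀, hDC₀, hb₀⟩ := exists_opt_schedule (r := r) (c := c) hr I
    have hbJm : setBudget r c Jm ≤ setBudget r c I := by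
      refine restricted_budget_le hS₀ hDC₀ hJmIdeal.1 (setBudget_nonneg hr I) ?_
      intro t
      have hAt : IsIdealIn r I (S₀.take t).toFinset := sched_take_ideal hS₀ hDC₀ t
      have hU : IsIdealIn r I ((S₀.take t).toFinset ∪ Jm) := ideal_union hAt hJmIdeal
      have hUc : setCost c Jm ≤ setCost c ((S₀.take t).toFinset ∪ Jm) :=
        hmin _ ((hmem _).mpr hU)
      have hA : setCost c (S₀.take t).toFinset ≤ setBudget r c I := by
        rw [← cost_take_eq hS₀, ← hb₀]
        exact listCost_take_le S₀ t
      rw [setCost_inter_eq]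
      linarith
    have hneg : setCost c Jm < 0 := lt_of_le_of_lt hJmle hc
    have hcbr := hirr Jm hJmIdeal
    have hJmge : setCost c I ≤ setCost c Jm := by
      rcases hcbr with ⟨_, h1⟩ | ⟨_, _, h1⟩ | ⟨_, _, hbeq, hret⟩ | ⟨h1, _⟩
      · linarith
      · linarith
      · simp only [setReturn] at hret
        linarith
      · linarith
    intro J hJ
    have := hmin J ((hmem J).mpr hJ)
    rw [min_eq_right (le_of_lt hc)]
    linarith

/-- L2: every ideal of an irreducible block has return at least the block's return. -/
lemma ideal_return_ge : ∀ J, IsIdealIn r I J → setReturn r c I ≤ setReturn r c J := by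
  rcases le_or_gt 0 (setCost c I) with hc | hc
  · intro J hJ
    rcases hirr J hJ with ⟨h1, _⟩ | ⟨h1, _⟩ | ⟨h1, _⟩ | ⟨_, _, h2⟩
    · linarith
    · linarith
    · linarith
    · exact h2
  · intro J hJ
    have hL1 : ∀ K, IsIdealIn r I K → setCost c I ≤ setCost c K := by
      intro K hK
      have := ideal_cost_ge hr hirr K hK
      rw [min_eq_right (le_of_lt hc)] at this
      exact this
    obtain ⟨S₀, hS₀, hDC₀, hb₀⟩ := exists_opt_schedule (r := r) (c := c) hr I
    have hJc : setCost c I ≤ setCost c J := hL1 J hJ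
    have hbJ : setBudget r c J ≤ setBudget r c I - setCost c I + setCost c J := by
      refine restricted_budget_le hS₀ hDC₀ hJ.1 ?_ ?_
      · have := setBudget_nonneg (r := r) (c := c) hr I
        linarith
      · intro t
        have hAt : IsIdealIn r I (S₀.take t).toFinset := sched_take_ideal hS₀ hDC₀ t
        have hU : IsIdealIn r I ((S₀.take t).toFinset ∪ J) :=
          ideal_union hAt hJ
        have hUc : setCost c I ≤ setCost c ((S₀.take t).toFinset ∪ J) := hL1 _ hU
        have hA : setCost c (S₀.take t).toFinset ≤ setBudget r c I := by
          rw [← cost_take_eq hS₀, ← hb₀]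
          exact listCost_take_le S₀ t
        rw [setCost_inter_eq]
        linarith
    simp only [setReturn]
    linarith

end Irr

/-! ### Section F: virtual budget arithmetic -/

/-- virtual budget of a list of (cost, budget) pairs -/
def vb : List (ℝ × ℝ) → ℝ
  | [] => 0
  | p :: L => max p.2 (p.1 + vb L)

def vc (L : List (ℝ × ℝ)) : ℝ := (L.map Prod.fst).sum

noncomputable def vr (L : List (ℝ × ℝ)) : ℝ := vc L - vb L

def vgood (p : ℝ × ℝ) : Prop := 0 ≤ p.2 ∧ p.1 ≤ p.2

lemma vc_nil : vc ([] : List (ℝ × ℝ)) = 0 := rfl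
lemma vb_nil : vb ([] : List (ℝ × ℝ)) = 0 := rfl
lemma vr_nil : vr ([] : List (ℝ × ℝ)) = 0 := by simp [vr, vc_nil, vb_nil]

lemma vc_append (A B : List (ℝ × ℝ)) : vc (A ++ B) = vc A + vc B := by
  simp [vc]

lemma vb_nonneg : ∀ (L : List (ℝ × ℝ)), (∀ p ∈ L, vgood p) → 0 ≤ vb L := by
  intro L hL
  cases L with
  | nil => simp [vb]
  | cons p L =>
    have := (hL p (List.mem_cons_self)).1
    exact le_trans this (le_max_left _ _)

lemma vb_append (A B : List (ℝ × ℝ)) (hB : ∀ p ∈ B, vgood p) :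
    vb (A ++ B) = max (vb A) (vc A + vb B) := by
  induction A with
  | nil =>
    simp only [List.nil_append, vb, vc_nil, zero_add]
    exact (max_eq_right (vb_nonneg B hB)).symm
  | cons p T ih =>
    show max p.2 (p.1 + vb (T ++ B)) = max (max p.2 (p.1 + vb T)) (vc (p :: T) + vb B)
    rw [ih, ← max_add_add_left, ← max_assoc]
    have hvc : vc (p :: T) = p.1 + vc T := by simp [vc]
    rw [hvc, add_assoc]

lemma vb_single_good {p : ℝ × ℝ} (h : vgood p) : vb [p] = p.2 := by
  simp only [vb, add_zero]
  exact max_eq_left h.2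

lemma vr_concat {p : ℝ × ℝ} (h : vgood p) (L : List (ℝ × ℝ)) :
    vr (L ++ [p]) = min (vr L + p.1) (p.1 - p.2) := by
  have hap := vb_append L [p] (by intro q hq; rw [List.mem_singleton] at hq; rwa [hq])
  simp only [vr, hap, vc_append, vb_single_good h]
  have : vc [p] = p.1 := by simp [vc]
  rw [this]
  rcases le_total (vb L) (vc L + p.2) with hm | hm
  · rw [max_eq_right hm, min_eq_right (by linarith)]
    ring
  · rw [max_eq_left hm, min_eq_left (by linarith)]
    ring

lemma vr_le_fst_sub_snd {p : ℝ × ℝ} (h : vgood p) (L : List (ℝ × ℝ)) :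
    vr (L ++ [p]) ≤ p.1 - p.2 := by
  rw [vr_concat h]; exact min_le_right _ _

lemma vr_take_ge (L : List (ℝ × ℝ)) (hneg : ∀ p ∈ L, p.1 < 0)
    (hgood : ∀ p ∈ L, vgood p) : ∀ l, vr L ≤ vr (L.take l) := by
  induction L using List.reverseRecOn with
  | nil => intro l; rw [List.take_nil]
  | append_singleton T p ih =>
    intro l
    have hgT : ∀ q ∈ T, vgood q := fun q hq => hgood q (List.mem_append_left _ hq)
    have hnT : ∀ q ∈ T, q.1 < 0 := fun q hq => hneg q (List.mem_append_left _ hq)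
    have hp : vgood p := hgood p (List.mem_append_right _ (List.mem_singleton_self p))
    have hpneg : p.1 < 0 := hneg p (List.mem_append_right _ (List.mem_singleton_self p))
    by_cases hl : l ≤ T.length
    · rw [List.take_append_of_le_length hl]
      have h1 : vr (T ++ [p]) ≤ vr T + p.1 := by
        rw [vr_concat hp]; exact min_le_left _ _
      have h2 := ih hnT hgT l
      linarith
    · rw [List.take_append, List.take_of_length_le (by omega)]
      have h1 : ([p] : List (ℝ × ℝ)).take (l - T.length) = [p] :=
        List.take_of_length_le (by rw [List.length_singleton]; omega)
      rw [h1]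

/-- F3: the virtual exchange lemma. -/
lemma virtual_exchange :
    ∀ (L : List ((ℝ × ℝ) × (ℝ × ℝ))),
      (∀ q ∈ L, vgood q.1 ∧ vgood q.2) →
      (∀ q ∈ L, q.1.1 - q.1.2 ≤ q.2.1 - q.2.2) →
      (∀ q ∈ L, q.1.1 < 0 → q.1.1 ≤ q.2.1) →
      (∀ q ∈ L, q.2.1 < 0 → q.1.1 < 0) →
      L.Pairwise (fun q q' => q'.1.1 < 0 → q.1.1 < 0) →
      ∃ l ≤ L.length, vr ((L.map Prod.fst).take l) ≤ vr (L.map Prod.snd) := by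
  intro L
  induction L using List.reverseRecOn with
  | nil => intro _ _ _ _ _; exact ⟨0, by simp, by simp⟩
  | append_singleton T q ih =>
    intro hgood hL2 hL1 hL1' hmono
    have hmemq : q ∈ T ++ [q] := List.mem_append_right _ (List.mem_singleton_self q)
    have hgT : ∀ p ∈ T, vgood p.1 ∧ vgood p.2 := fun p hp => hgood p (List.mem_append_left _ hp)
    have hL2T : ∀ p ∈ T, p.1.1 - p.1.2 ≤ p.2.1 - p.2.2 :=
      fun p hp => hL2 p (List.mem_append_left _ hp)
    have hL1T : ∀ p ∈ T, p.1.1 < 0 → p.1.1 ≤ p.2.1 :=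
      fun p hp => hL1 p (List.mem_append_left _ hp)
    have hL1'T : ∀ p ∈ T, p.2.1 < 0 → p.1.1 < 0 :=
      fun p hp => hL1' p (List.mem_append_left _ hp)
    have hmonoT : T.Pairwise (fun q q' => q'.1.1 < 0 → q.1.1 < 0) :=
      (List.pairwise_append.mp hmono).1
    obtain ⟨l, hll, hle⟩ := ih hgT hL2T hL1T hL1'T hmonoT
    have hmapf : (T ++ [q]).map Prod.fst = T.map Prod.fst ++ [q.1] := by simp
    have hmaps : (T ++ [q]).map Prod.snd = T.map Prod.snd ++ [q.2] := by simp
    have hgq := hgood q hmemq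
    have hvrX : vr ((T ++ [q]).map Prod.snd)
        = min (vr (T.map Prod.snd) + q.2.1) (q.2.1 - q.2.2) := by
      rw [hmaps, vr_concat hgq.2]
    have hvrB : vr ((T ++ [q]).map Prod.fst)
        = min (vr (T.map Prod.fst) + q.1.1) (q.1.1 - q.1.2) := by
      rw [hmapf, vr_concat hgq.1]
    rcases lt_or_ge q.2.1 0 with hx | hx
    · -- X-cost negative: use the full prefix
      have hc : q.1.1 < 0 := hL1' q hmemq hx
      have hTneg : ∀ p ∈ T.map Prod.fst, p.1 < 0 := by
        intro p hp
        rw [List.mem_map] at hp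
        obtain ⟨a, ha, rfl⟩ := hp
        have := (List.pairwise_append.mp hmono).2.2 a ha q (List.mem_singleton_self q)
        exact this hc
      have hTgood : ∀ p ∈ T.map Prod.fst, vgood p := by
        intro p hp
        rw [List.mem_map] at hp
        obtain ⟨a, ha, rfl⟩ := hp
        exact (hgT a ha).1
      have hBT : vr (T.map Prod.fst) ≤ vr (T.map Prod.snd) :=
        le_trans (vr_take_ge _ hTneg hTgood l) hle
      refine ⟨(T ++ [q]).length, le_refl _, ?_⟩
      have hfull : ((T ++ [q]).map Prod.fst).take ((T ++ [q]).length)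
          = (T ++ [q]).map Prod.fst := List.take_of_length_le (by simp)
      rw [hfull, hvrB, hvrX]
      refine le_min ?_ ?_
      · refine le_trans (min_le_left _ _) ?_
        have := hL1 q hmemq hc
        linarith
      · refine le_trans (min_le_right _ _) (hL2 q hmemq)
    · -- X-cost nonnegative
      rcases le_total (vr (T.map Prod.snd) + q.2.1) (q.2.1 - q.2.2) with hm | hm
      · refine ⟨l, by rw [List.length_append, List.length_singleton]; omega, ?_⟩
        rw [hvrX, min_eq_left hm, hmapf, List.take_append_of_le_length (by simpa using hll)]
        have : vr ((T.map Prod.fst).take l) ≤ vr (T.map Prod.snd) := hle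
        linarith
      · refine ⟨(T ++ [q]).length, le_refl _, ?_⟩
        have hfull : ((T ++ [q]).map Prod.fst).take ((T ++ [q]).length)
            = (T ++ [q]).map Prod.fst := List.take_of_length_le (by simp)
        rw [hfull, hvrB, hvrX, min_eq_right hm]
        exact le_trans (min_le_right _ _) (hL2 q hmemq)

/-! ### Section E: optimality of increasing irreducible structure -/

def UB (BS : List (Finset ι)) : Finset ι := BS.foldr (· ∪ ·) ∅

lemma UB_nil : UB ([] : List (Finset ι)) = ∅ := rfl
lemma UB_cons (B : Finset ι) (BS : List (Finset ι)) : UB (B :: BS) = B ∪ UB BS := rfl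

lemma mem_UB {BS : List (Finset ι)} {x : ι} : x ∈ UB BS ↔ ∃ B ∈ BS, x ∈ B := by
  induction BS with
  | nil => simp [UB_nil]
  | cons B T ih =>
    rw [UB_cons, Finset.mem_union, ih]
    simp

lemma subset_UB {BS : List (Finset ι)} {B : Finset ι} (h : B ∈ BS) : B ⊆ UB BS :=
  fun x hx => mem_UB.mpr ⟨B, h, hx⟩

/-- All the structure we need about a list of blocks. -/
structure GB (r : ι → ι → Prop) (c : ι → ℝ) (BS : List (Finset ι)) : Prop where
  irr : ∀ B ∈ BS, ∀ J, IsIdealIn r B J → cbrLE r c B J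
  incr : BS.Pairwise (cbrLE r c)
  disj : BS.Pairwise (fun A B => ∀ x, x ∈ A → x ∉ B)
  forward : BS.Pairwise (fun A B => ∀ x ∈ B, ∀ y ∈ A, ¬r x y)

lemma GB.sublist {BS BS' : List (Finset ι)} (h : GB r c BS) (hs : BS' <+ BS) :
    GB r c BS' :=
  ⟨fun B hB => h.irr B (hs.subset hB), h.incr.sublist hs, h.disj.sublist hs,
    h.forward.sublist hs⟩

/-- cost of the part of block `B` scheduled within the first `t` steps of `T` -/
def fB (c : ι → ℝ) (T : List ι) (B : Finset ι) (t : ℕ) : ℝ :=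
  listCost c ((T.take t).filter (fun x => decide (x ∈ B)))

lemma fB_zero (T : List ι) (B : Finset ι) : fB c T B 0 = 0 := by
  simp [fB, listCost]

lemma fB_eq_setCost {T : List ι} (hnd : T.Nodup) (B : Finset ι) (t : ℕ) :
    fB c T B t = setCost c ((T.take t).toFinset ∩ B) := by
  rw [fB, listCost_eq_setCost ((nodup_take hnd t).filter _), toFinset_filter_mem]

lemma fB_cap {T : List ι} {B : Finset ι} {t : ℕ} (h : T.length ≤ t) :
    fB c T B t = fB c T B T.length := by
  unfold fB
  rw [List.take_of_length_le h, List.take_of_length_le (le_refl _)]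

lemma fB_full {M : Finset ι} {T : List ι} (hT : IsScheduleOf M T) {B : Finset ι}
    (hB : B ⊆ M) : fB c T B T.length = setCost c B := by
  rw [fB_eq_setCost hT.1, List.take_of_length_le (le_refl _), IsScheduleOf.toFinset_eq hT,
    Finset.inter_eq_right.mpr hB]

lemma fB_add {T : List ι} {B : Finset ι} (s v : ℕ) :
    fB c T B (s + v) = fB c T B s + listCost c (((T.drop s).take v).filter (fun x => decide (x ∈ B))) := by
  unfold fB
  rw [List.take_add, List.filter_append, listCost_append]

/-- partition of a list cost over disjoint covering blocks -/
lemma listCost_partition (BS : List (Finset ι)) (S : List ι)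
    (hcov : ∀ x ∈ S, x ∈ UB BS)
    (hdisj : BS.Pairwise (fun A B => ∀ x, x ∈ A → x ∉ B)) :
    listCost c S = (BS.map (fun B => listCost c (S.filter (fun x => decide (x ∈ B))))).sum := by
  induction BS generalizing S with
  | nil =>
    cases S with
    | nil => simp [listCost]
    | cons a T => exact absurd (hcov a (List.mem_cons_self)) (by simp [UB_nil])
  | cons B BT ih =>
    have hdisjT := (List.pairwise_cons.mp hdisj).2
    have hBdisj := (List.pairwise_cons.mp hdisj).1
    have hsplit : listCost c (S.filter (fun x => decide (x ∈ B) || decide (x ∈ UB BT)))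
        = listCost c (S.filter (fun x => decide (x ∈ B)))
          + listCost c (S.filter (fun x => decide (x ∈ UB BT))) := by
      refine listCost_filter_or _ _ S ?_
      rintro x hx ⟨h1, h2⟩
      rw [decide_eq_true_eq] at h1 h2
      obtain ⟨A, hA, hxA⟩ := mem_UB.mp h2
      exact hBdisj A hA x h1 hxA
    have hall : S.filter (fun x => decide (x ∈ B) || decide (x ∈ UB BT)) = S := by
      refine List.filter_eq_self.mpr ?_
      intro a ha
      have h := hcov a ha
      rw [UB_cons, Finset.mem_union] at h
      rcases h with h | h <;> simp [h]
    have ihS := ih (S.filter (fun x => decide (x ∈ UB BT)))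
      (fun x hx => by
        have h := (List.mem_filter.mp hx).2
        simpa using h) hdisjT
    have hcollapse : ∀ A ∈ BT,
        (S.filter (fun x => decide (x ∈ UB BT))).filter (fun x => decide (x ∈ A))
          = S.filter (fun x => decide (x ∈ A)) := by
      intro A hA
      rw [List.filter_filter]
      refine List.filter_congr ?_
      intro a _
      by_cases h : a ∈ A
      · have : a ∈ UB BT := mem_UB.mpr ⟨A, hA, h⟩
        simp [h, this]
      · simp [h]
    calc listCost c S
        = listCost c (S.filter (fun x => decide (x ∈ B) || decide (x ∈ UB BT))) := by
          rw [hall]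
      _ = listCost c (S.filter (fun x => decide (x ∈ B)))
            + listCost c (S.filter (fun x => decide (x ∈ UB BT))) := hsplit
      _ = listCost c (S.filter (fun x => decide (x ∈ B)))
            + (BT.map (fun A => listCost c ((S.filter (fun x => decide (x ∈ UB BT))).filter
                (fun x => decide (x ∈ A))))).sum := by rw [ihS]
      _ = (List.map (fun B => listCost c (S.filter (fun x => decide (x ∈ B)))) (B :: BT)).sum := by
          rw [List.map_cons, List.sum_cons]
          congr 1
          refine congrArg List.sum ?_
          refine List.map_congr_left ?_
          intro A hA
          rw [hcollapse A hA]

lemma cost_take_partition {BS : List (Finset ι)} {T : List ι}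
    (hT : IsScheduleOf (UB BS) T)
    (hdisj : BS.Pairwise (fun A B => ∀ x, x ∈ A → x ∉ B)) (t : ℕ) :
    listCost c (T.take t) = (BS.map (fun B => fB c T B t)).sum := by
  exact listCost_partition BS (T.take t)
    (fun x hx => (hT.2 x).mp (List.take_subset _ _ hx)) hdisj

lemma UB_append (A B : List (Finset ι)) : UB (A ++ B) = UB A ∪ UB B := by
  induction A with
  | nil => rw [List.nil_append, UB_nil, Finset.empty_union]
  | cons C T ih => rw [List.cons_append, UB_cons, UB_cons, ih, Finset.union_assoc]

section OPT
variable (hr : IsPartialOrder ι r)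
include hr

/-- cbr consequences -/
lemma cbr_nonneg_right {X Y : Finset ι} (h : cbrLE r c X Y) (hX : 0 ≤ setCost c X) :
    0 ≤ setCost c Y ∧ setReturn r c X ≤ setReturn r c Y := by
  rcases h with ⟨h1, _⟩ | ⟨h1, _⟩ | ⟨h1, _⟩ | ⟨_, h2, h3⟩
  · linarith
  · linarith
  · linarith
  · exact ⟨h2, h3⟩

lemma cbr_budget_le {X Y : Finset ι} (h : cbrLE r c X Y) (hY : setCost c Y < 0) :
    setBudget r c X ≤ setBudget r c Y := by
  rcases h with ⟨_, h1⟩ | ⟨_, _, h1⟩ | ⟨_, _, h1, _⟩ | ⟨_, h1, _⟩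
  · linarith
  · exact le_of_lt h1
  · exact le_of_eq h1
  · linarith

omit hr in
lemma neg_ideal_budget_ge {B : Finset ι}
    (hirr : ∀ J, IsIdealIn r B J → cbrLE r c B J)
    {J : Finset ι} (hJ : IsIdealIn r B J) (hJneg : setCost c J < 0) :
    setBudget r c B ≤ setBudget r c J := by
  rcases hirr J hJ with ⟨_, h1⟩ | ⟨_, _, h1⟩ | ⟨_, _, h1, _⟩ | ⟨_, h1, _⟩
  · linarith
  · exact le_of_lt h1
  · exact le_of_eq h1
  · linarith

omit hr in
lemma neg_ideal_block_neg {B : Finset ι}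
    (hirr : ∀ J, IsIdealIn r B J → cbrLE r c B J)
    {J : Finset ι} (hJ : IsIdealIn r B J) (hJneg : setCost c J < 0) :
    setCost c B < 0 := by
  by_contra hge
  push_neg at hge
  rcases hirr J hJ with ⟨h1, _⟩ | ⟨h1, _⟩ | ⟨h1, _⟩ | ⟨_, h2, _⟩ <;> linarith

/-- E1: first-crossing. The budget of the first block is a lower bound for
the budget of any feasible schedule of the union. -/
lemma first_crossing {B : Finset ι} {Q : List (Finset ι)}
    (hGB : GB r c (B :: Q)) {T : List ι}
    (hT : IsScheduleOf (UB (B :: Q)) T) (hDC : DC r T) :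
    setBudget r c B ≤ listBudget c T := by
  classical
  set BS := B :: Q with hBS
  set b1 := setBudget r c B with hb1def
  have hb1 : 0 ≤ b1 := setBudget_nonneg hr B
  -- every block's own budget is eventually reached
  have hreach : ∀ C ∈ BS, ∀ β : ℝ, β ≤ setBudget r c C → 0 < β → ∃ t, β ≤ fB c T C t := by
    intro C hC β hβle hβpos
    have hCsub : C ⊆ UB BS := subset_UB hC
    have hfilt := sched_filter (r := r) hT hDC C
    rw [Finset.inter_eq_right.mpr hCsub] at hfilt
    have h1 : β ≤ listBudget c (T.filter (fun x => decide (x ∈ C))) :=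
      le_trans hβle (setBudget_le hfilt.1 hfilt.2)
    obtain ⟨u, hu⟩ := exists_take_of_le_listBudget hβpos h1
    obtain ⟨t, ht⟩ := filter_take_comm (fun x => decide (x ∈ C)) T u
    exact ⟨t, by rw [fB, ← ht]; exact hu⟩
  -- the crossing predicate
  by_cases hb1pos : 0 < b1
  case neg =>
    have : b1 = 0 := le_antisymm (not_lt.mp hb1pos) hb1
    rw [this]
    exact listBudget_nonneg T
  case pos =>
  have hex : ∃ t, ∃ C ∈ BS, b1 ≤ fB c T C t := by
    obtain ⟨t, ht⟩ := hreach B (List.mem_cons_self) b1 (le_refl _) hb1pos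
    exact ⟨t, B, List.mem_cons_self, ht⟩
  have hdec : DecidablePred (fun t => ∃ C ∈ BS, b1 ≤ fB c T C t) := fun _ => Classical.dec _
  set τ := @Nat.find _ hdec hex with hτdef
  obtain ⟨C₀, hC₀mem, hC₀⟩ : ∃ C ∈ BS, b1 ≤ fB c T C τ := @Nat.find_spec _ hdec hex
  -- all blocks are nonnegative at time τ
  have hnonneg : ∀ C ∈ BS, 0 ≤ fB c T C τ := by
    intro C hC
    by_contra hneg
    push_neg at hneg
    have hndT : T.Nodup := hT.1
    have hJideal : IsIdealIn r C ((T.take τ).toFinset ∩ C) :=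
      ideal_inter_block (subset_UB hC) (sched_take_ideal hT hDC τ)
    have hJcost : setCost c ((T.take τ).toFinset ∩ C) < 0 := by
      rw [← fB_eq_setCost hndT]
      exact hneg
    have hirrC := hGB.irr C hC
    -- the block is negative, so its budget dominates b1
    have hCneg : setCost c C < 0 := neg_ideal_block_neg hirrC hJideal hJcost
    have hb1C : b1 ≤ setBudget r c C := by
      rcases List.mem_cons.mp hC with rfl | hCQ
      · exact le_refl _
      · exact cbr_budget_le hr ((List.pairwise_cons.mp hGB.incr).1 C hCQ) hCneg
    have hJb : setBudget r c C ≤ setBudget r c ((T.take τ).toFinset ∩ C) :=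
      neg_ideal_budget_ge hirrC hJideal hJcost
    -- and the budget of the piece is witnessed before τ
    have hsched_take : IsScheduleOf (T.take τ).toFinset (T.take τ) :=
      ⟨nodup_take hndT τ, fun j => (List.mem_toFinset).symm⟩
    have hfilt := sched_filter (r := r) hsched_take (hDC.take τ) C
    have hbJle : setBudget r c ((T.take τ).toFinset ∩ C)
        ≤ listBudget c ((T.take τ).filter (fun x => decide (x ∈ C))) :=
      setBudget_le hfilt.1 hfilt.2
    have hble : b1 ≤ listBudget c ((T.take τ).filter (fun x => decide (x ∈ C))) :=
      le_trans hb1C (le_trans hJb hbJle)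
    obtain ⟨u, hu⟩ := exists_take_of_le_listBudget hb1pos hble
    obtain ⟨s, hs⟩ := filter_take_comm (fun x => decide (x ∈ C)) (T.take τ) u
    rw [hs, List.take_take] at hu
    have hPs : ∃ C' ∈ BS, b1 ≤ fB c T C' (min s τ) := ⟨C, hC, hu⟩
    have hτle : τ ≤ min s τ := @Nat.find_le _ _ hdec hex hPs
    have hmin : min s τ = τ := le_antisymm (min_le_right _ _) hτle
    rw [hmin] at hu
    have : (0:ℝ) < 0 := lt_of_le_of_lt (le_trans hb1 hu) hneg
    exact lt_irrefl _ this
  -- sum up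
  have hsum : listCost c (T.take τ) = (BS.map (fun C => fB c T C τ)).sum :=
    cost_take_partition hT hGB.disj τ
  obtain ⟨l1, l2, hsplit⟩ := List.append_of_mem hC₀mem
  have hbound : b1 ≤ listCost c (T.take τ) := by
    rw [hsum, hsplit, List.map_append, List.map_cons, List.sum_append, List.sum_cons]
    have h1 : 0 ≤ (l1.map (fun C => fB c T C τ)).sum := by
      refine List.sum_nonneg ?_
      intro x hx
      obtain ⟨C, hC, rfl⟩ := List.mem_map.mp hx
      exact hnonneg C (by rw [hsplit]; exact List.mem_append_left _ hC)
    have h2 : 0 ≤ (l2.map (fun C => fB c T C τ)).sum := by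
      refine List.sum_nonneg ?_
      intro x hx
      obtain ⟨C, hC, rfl⟩ := List.mem_map.mp hx
      refine hnonneg C (by rw [hsplit]; exact List.mem_append_right _ (List.mem_cons_of_mem _ hC))
    linarith
  exact le_trans hbound (listCost_take_le T τ)

end OPT

section OPT2
variable (hr : IsPartialOrder ι r)
include hr

/-- E2: last-peak argument, for the all-nonnegative case with target the last block. -/
lemma last_peak {BS P : List (Finset ι)} {B : Finset ι}
    (hGB : GB r c BS) (hnn : ∀ C ∈ BS, 0 ≤ setCost c C)
    {T : List ι} (hT : IsScheduleOf (UB BS) T) (hDC : DC r T)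
    (hsplit : BS = P ++ [B]) :
    (P.map (setCost c)).sum + setBudget r c B ≤ listBudget c T := by
  classical
  have hndT : T.Nodup := hT.1
  set n := T.length with hn
  -- qualifying times
  set Qs := (Finset.range (n + 1)).filter
    (fun t => ∃ C ∈ BS, setBudget r c C ≤ fB c T C t) with hQs
  have hBmem : B ∈ BS := by rw [hsplit]; exact List.mem_append_right _ (List.mem_singleton_self _)
  -- existence of a qualifying time for any block
  have hreach : ∀ C ∈ BS, ∃ t ≤ n, setBudget r c C ≤ fB c T C t := by
    intro C hC
    rcases lt_or_ge 0 (setBudget r c C) with hpos | hz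
    · have hCsub : C ⊆ UB BS := subset_UB hC
      have hfilt := sched_filter (r := r) hT hDC C
      rw [Finset.inter_eq_right.mpr hCsub] at hfilt
      have h1 : setBudget r c C ≤ listBudget c (T.filter (fun x => decide (x ∈ C))) :=
        setBudget_le hfilt.1 hfilt.2
      obtain ⟨u, hu⟩ := exists_take_of_le_listBudget hpos h1
      obtain ⟨t, ht⟩ := filter_take_comm (fun x => decide (x ∈ C)) T u
      rw [ht] at hu
      by_cases htn : t ≤ n
      · exact ⟨t, htn, hu⟩
      · refine ⟨n, le_refl _, ?_⟩
        have hcap : fB c T C t = fB c T C n := fB_cap (by omega)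
        rw [← hcap, fB]
        exact hu
    · exact ⟨0, by omega, by rw [fB_zero]; linarith [setBudget_nonneg (r := r) (c := c) hr C]⟩
  have hQne : Qs.Nonempty := by
    obtain ⟨t, htn, ht⟩ := hreach B hBmem
    exact ⟨t, Finset.mem_filter.mpr ⟨Finset.mem_range.mpr (by omega), B, hBmem, ht⟩⟩
  set t₀ := Qs.max' hQne with ht₀
  have ht₀mem := Qs.max'_mem hQne
  have ht₀n : t₀ ≤ n := by
    have := (Finset.mem_filter.mp ht₀mem).1
    rw [Finset.mem_range] at this
    omega
  obtain ⟨C₀, hC₀mem, hC₀⟩ : ∃ C ∈ BS, setBudget r c C ≤ fB c T C t₀ :=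
    (Finset.mem_filter.mp ht₀mem).2
  -- every block is essentially finished at time t₀
  have hfin : ∀ C ∈ BS, setCost c C ≤ fB c T C t₀ := by
    intro C hC
    by_contra hdef
    push_neg at hdef
    set J := (T.take t₀).toFinset ∩ C with hJdef
    have hJideal : IsIdealIn r C J :=
      ideal_inter_block (subset_UB hC) (sched_take_ideal hT hDC t₀)
    have hJcost : setCost c J = fB c T C t₀ := (fB_eq_setCost hndT C t₀).symm
    have hirrC := hGB.irr C hC
    rcases le_or_gt (setBudget r c C) (setBudget r c J) with hbJ | hbJ
    · -- L2 contradiction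
      have hret := ideal_return_ge hr hirrC J hJideal
      simp only [setReturn] at hret
      rw [hJcost] at hret
      linarith
    · -- gluing: the block must peak again in the future
      obtain ⟨SJ, hSJ, hSJDC, hSJb⟩ := exists_opt_schedule (r := r) (c := c) hr J
      set tail := (T.drop t₀).filter (fun x => decide (x ∈ C)) with htail
      have htailDC : DC r tail := (hDC.drop hndT t₀).filter _
      have htailnd : tail.Nodup :=
        List.Nodup.filter _ (List.Nodup.sublist (List.drop_sublist t₀ T) hndT)
      have htdisj : ∀ x ∈ SJ, x ∉ tail := by
        intro x hx hxtail
        have hxJ : x ∈ J := (hSJ.2 x).mp hx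
        have hxtake : x ∈ T.take t₀ := by
          have := Finset.mem_inter.mp (hJdef ▸ hxJ)
          exact List.mem_toFinset.mp this.1
        have hxdrop : x ∈ T.drop t₀ := (List.mem_filter.mp hxtail).1
        have hnd2 : (T.take t₀ ++ T.drop t₀).Nodup := by rw [List.take_append_drop]; exact hndT
        exact (List.nodup_append.mp hnd2).2.2 x hxtake x hxdrop rfl
      have hGsched : IsScheduleOf C (SJ ++ tail) := by
        constructor
        · exact List.nodup_append.mpr ⟨hSJ.1, htailnd, fun a ha b hb hab => htdisj a ha (hab ▸ hb)⟩
        · intro j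
          rw [List.mem_append, hSJ.2 j, List.mem_filter]
          constructor
          · rintro (hj | ⟨hj1, hj2⟩)
            · exact (Finset.mem_inter.mp (hJdef ▸ hj)).2
            · rwa [decide_eq_true_eq] at hj2
          · intro hjC
            have hjT : j ∈ T := (hT.2 j).mpr (subset_UB hC hjC)
            rcases List.mem_append.mp (by rwa [← List.take_append_drop t₀ T] at hjT) with h | h
            · exact Or.inl (by rw [hJdef]; exact Finset.mem_inter.mpr ⟨List.mem_toFinset.mpr h, hjC⟩)
            · exact Or.inr ⟨h, by simpa using hjC⟩
      have hGDC : DC r (SJ ++ tail) := by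
        refine DC.append hSJDC htailDC ?_
        intro x hx y hy hrxy
        have hyJ : y ∈ J := (hSJ.2 y).mp hy
        have hytake : y ∈ (T.take t₀).toFinset := (Finset.mem_inter.mp (hJdef ▸ hyJ)).1
        have hxT : x ∈ T := List.drop_subset _ _ (List.mem_filter.mp hx).1
        have hxtake : x ∈ T.take t₀ :=
          hDC t₀ y (List.mem_toFinset.mp hytake) x hxT hrxy
        have hxdrop : x ∈ T.drop t₀ := (List.mem_filter.mp hx).1
        have hnd2 : (T.take t₀ ++ T.drop t₀).Nodup := by rw [List.take_append_drop]; exact hndT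
        exact (List.nodup_append.mp hnd2).2.2 x hxtake x hxdrop rfl
      have hbG : setBudget r c C ≤ listBudget c (SJ ++ tail) := setBudget_le hGsched hGDC
      rw [listBudget_append] at hbG
      have hSJcost : listCost c SJ = fB c T C t₀ := by
        rw [listCost_of_sched hSJ, hJcost]
      have hbtail : setBudget r c C ≤ listCost c SJ + listBudget c tail := by
        rcases le_max_iff.mp hbG with h | h
        · rw [hSJb] at h; linarith
        · exact h
      have hcostle : setCost c C ≤ setBudget r c C := setCost_le_setBudget hr C
      have hpos : 0 < setBudget r c C - fB c T C t₀ := by linarith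
      have hble : setBudget r c C - fB c T C t₀ ≤ listBudget c tail := by
        rw [hSJcost] at hbtail; linarith
      obtain ⟨u, hu⟩ := exists_take_of_le_listBudget hpos hble
      obtain ⟨v, hv⟩ := filter_take_comm (fun x => decide (x ∈ C)) (T.drop t₀) u
      rw [hv] at hu
      have hfuture : setBudget r c C ≤ fB c T C (t₀ + v) := by
        rw [fB_add]
        linarith
      -- contradiction with maximality of t₀
      by_cases hcap : t₀ + v ≤ n
      · have hmem' : (t₀ + v) ∈ Qs :=
          Finset.mem_filter.mpr ⟨Finset.mem_range.mpr (by omega), C, hC, hfuture⟩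
        have hle' : t₀ + v ≤ t₀ := Finset.le_max' Qs _ hmem'
        have hv0 : v = 0 := by omega
        rw [hv0, Nat.add_zero] at hfuture
        linarith
      · have hfn : setBudget r c C ≤ fB c T C n := by
          have := fB_cap (c := c) (T := T) (B := C) (t := t₀ + v) (by omega)
          rw [this] at hfuture
          exact hfuture
        have hmem' : n ∈ Qs :=
          Finset.mem_filter.mpr ⟨Finset.mem_range.mpr (by omega), C, hC, hfn⟩
        have hle' : n ≤ t₀ := Finset.le_max' Qs _ hmem'
        have ht0n : t₀ = n := by omega
        have : fB c T C t₀ = setCost c C := by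
          rw [ht0n, fB_full hT (subset_UB hC)]
        linarith
  -- summation
  have hsum : listCost c (T.take t₀) = (BS.map (fun C => fB c T C t₀)).sum :=
    cost_take_partition hT hGB.disj t₀
  have htarget : (P.map (setCost c)).sum + setBudget r c B ≤ listCost c (T.take t₀) := by
    rw [hsum]
    rcases List.mem_append.mp (by rw [← hsplit]; exact hC₀mem) with hC₀P | hC₀B
    · -- the witness block is inside P
      obtain ⟨l1, l2, hP12⟩ := List.append_of_mem hC₀P
      have hret : setReturn r c C₀ ≤ setReturn r c B := by
        have hpair := (List.pairwise_append.mp (hsplit ▸ hGB.incr)).2.2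
        have := hpair C₀ hC₀P B (List.mem_singleton_self _)
        exact (cbr_nonneg_right hr this (hnn C₀ hC₀mem)).2
      rw [hsplit, hP12]
      simp only [List.map_append, List.sum_append, List.map_cons, List.sum_cons,
        List.append_assoc, List.cons_append, List.map_nil, List.sum_nil]
      have h1 : (l1.map (setCost c)).sum ≤ (l1.map (fun C => fB c T C t₀)).sum := by
        refine List.sum_le_sum ?_
        intro C hC
        refine hfin C ?_
        rw [hsplit, hP12]
        simp [hC]
      have h2 : (l2.map (setCost c)).sum ≤ (l2.map (fun C => fB c T C t₀)).sum := by
        refine List.sum_le_sum ?_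
        intro C hC
        refine hfin C ?_
        rw [hsplit, hP12]
        simp [hC]
      have h3 : setCost c B ≤ fB c T B t₀ := hfin B hBmem
      have h4 : setBudget r c C₀ ≤ fB c T C₀ t₀ := hC₀
      simp only [setReturn] at hret
      linarith
    · -- the witness block is B itself
      rw [List.mem_singleton] at hC₀B
      subst hC₀B
      rw [hsplit]
      simp only [List.map_append, List.sum_append, List.map_cons, List.sum_cons,
        List.map_nil, List.sum_nil]
      have h1 : (P.map (setCost c)).sum ≤ (P.map (fun C => fB c T C t₀)).sum := by
        refine List.sum_le_sum ?_
        intro C hC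
        exact hfin C (by rw [hsplit]; exact List.mem_append_left _ hC)
      linarith [hC₀]
  exact le_trans htarget (listCost_take_le T t₀)

end OPT2

section OPT3
variable (hr : IsPartialOrder ι r)
include hr

/-- The main optimality theorem: for an increasing irreducible block structure,
every feasible schedule's budget dominates each virtual term. -/
theorem opt_budget : ∀ (n : ℕ) (BS : List (Finset ι)), BS.length ≤ n → GB r c BS →
    ∀ (T : List ι), IsScheduleOf (UB BS) T → DC r T →
    ∀ (P : List (Finset ι)) (B : Finset ι) (Q : List (Finset ι)), BS = P ++ B :: Q →
      (P.map (setCost c)).sum + setBudget r c B ≤ listBudget c T := by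
  intro n
  induction n with
  | zero =>
    intro BS hlen _ T _ _ P B Q hsplit
    exfalso
    rw [hsplit, List.length_append, List.length_cons] at hlen
    omega
  | succ n ih =>
    intro BS hlen hGB T hT hDC P B Q hsplit
    classical
    cases P with
    | nil =>
      rw [List.nil_append] at hsplit
      subst hsplit
      simp only [List.map_nil, List.sum_nil, zero_add]
      exact first_crossing hr hGB hT hDC
    | cons B₀ P' =>
      have hBS : BS = B₀ :: (P' ++ B :: Q) := by rw [hsplit]; rfl
      rcases lt_or_ge (setCost c B₀) 0 with hneg | hpos
      · -- peel the first (negative) block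
        set BS' := P' ++ B :: Q with hBS'
        have hsub : BS' <+ BS := by rw [hBS]; exact List.sublist_cons_self _ _
        have hGB' : GB r c BS' := hGB.sublist hsub
        have hU' : UB BS' ⊆ UB BS := by
          intro x hx
          obtain ⟨C, hC, hxC⟩ := mem_UB.mp hx
          exact mem_UB.mpr ⟨C, hsub.subset hC, hxC⟩
        have hfilt := sched_filter (r := r) hT hDC (UB BS')
        rw [Finset.inter_eq_right.mpr hU'] at hfilt
        have hlen' : BS'.length ≤ n := by
          rw [hBS, List.length_cons] at hlen
          omega
        have hIH := ih BS' hlen' hGB' _ hfilt.1 hfilt.2 P' B Q rfl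
        have hwit : ∃ u, (P'.map (setCost c)).sum + setBudget r c B ≤
            listCost c ((T.filter (fun x => decide (x ∈ UB BS'))).take u) := by
          rcases le_or_gt ((P'.map (setCost c)).sum + setBudget r c B) 0 with hle | hlt
          · exact ⟨0, by simpa [listCost] using hle⟩
          · exact exists_take_of_le_listBudget hlt hIH
        obtain ⟨u, hu⟩ := hwit
        obtain ⟨t, ht⟩ := filter_take_comm (fun x => decide (x ∈ UB BS')) T u
        rw [ht] at hu
        have hcover : (T.take t).filter
            (fun x => decide (x ∈ B₀) || decide (x ∈ UB BS')) = T.take t := by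
          refine List.filter_eq_self.mpr ?_
          intro a ha
          have h0 := (hT.2 a).mp (List.take_subset _ _ ha)
          rw [hBS, UB_cons, Finset.mem_union] at h0
          rcases h0 with h0 | h0 <;> simp [h0]
        have hdisj2 : ∀ x ∈ T.take t,
            ¬(decide (x ∈ B₀) = true ∧ decide (x ∈ UB BS') = true) := by
          rintro x hx ⟨h1, h2⟩
          rw [decide_eq_true_eq] at h1 h2
          obtain ⟨C, hC, hxC⟩ := mem_UB.mp h2
          have hd := (List.pairwise_cons.mp (hBS ▸ hGB.disj)).1 C hC
          exact hd x h1 hxC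
        have hsplitc := listCost_filter_or (c := c) (fun x => decide (x ∈ B₀))
          (fun x => decide (x ∈ UB BS')) (T.take t) hdisj2
        rw [hcover] at hsplitc
        have hB₀mem : B₀ ∈ BS := by rw [hBS]; exact List.mem_cons_self
        have hB₀ideal : IsIdealIn r B₀ ((T.take t).toFinset ∩ B₀) :=
          ideal_inter_block (subset_UB hB₀mem) (sched_take_ideal hT hDC t)
        have hB₀cost : setCost c B₀ ≤
            listCost c ((T.take t).filter (fun x => decide (x ∈ B₀))) := by
          have h1 := ideal_cost_ge hr (hGB.irr B₀ hB₀mem) _ hB₀ideal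
          rw [min_eq_right (le_of_lt hneg)] at h1
          have h2 : fB c T B₀ t = setCost c ((T.take t).toFinset ∩ B₀) :=
            fB_eq_setCost hT.1 B₀ t
          rw [fB] at h2
          rw [h2]
          exact h1
        have hfinal : (List.map (setCost c) (B₀ :: P')).sum + setBudget r c B ≤
            listCost c (T.take t) := by
          rw [List.map_cons, List.sum_cons, hsplitc]
          linarith
        exact le_trans hfinal (listCost_take_le T t)
      · -- the head block is nonnegative, hence all blocks are nonnegative
        have hnn : ∀ C ∈ BS, 0 ≤ setCost c C := by
          intro C hC
          rw [hBS] at hC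
          rcases List.mem_cons.mp hC with rfl | hC'
          · exact hpos
          · have hpair := (List.pairwise_cons.mp (hBS ▸ hGB.incr)).1 C hC'
            exact (cbr_nonneg_right hr hpair hpos).1
        rcases List.eq_nil_or_concat Q with rfl | ⟨Q', Z, rfl⟩
        · exact last_peak hr hGB hnn hT hDC hsplit
        · -- peel the last (nonnegative) block Z
          set BS' := (B₀ :: P') ++ B :: Q' with hBS'
          have hshape : BS = BS' ++ [Z] := by rw [hsplit, hBS']; simp
          have hsub : BS' <+ BS := by rw [hshape]; exact List.sublist_append_left _ _
          have hGB' : GB r c BS' := hGB.sublist hsub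
          have hU' : UB BS' ⊆ UB BS := by
            intro x hx
            obtain ⟨C, hC, hxC⟩ := mem_UB.mp hx
            exact mem_UB.mpr ⟨C, hsub.subset hC, hxC⟩
          have hfilt := sched_filter (r := r) hT hDC (UB BS')
          rw [Finset.inter_eq_right.mpr hU'] at hfilt
          have hlen' : BS'.length ≤ n := by
            rw [hshape, List.length_append, List.length_singleton] at hlen
            omega
          have hIH := ih BS' hlen' hGB' _ hfilt.1 hfilt.2 (B₀ :: P') B Q' rfl
          have hwit : ∃ u, ((B₀ :: P').map (setCost c)).sum + setBudget r c B ≤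
              listCost c ((T.filter (fun x => decide (x ∈ UB BS'))).take u) := by
            rcases le_or_gt (((B₀ :: P').map (setCost c)).sum + setBudget r c B) 0 with hle | hlt
            · exact ⟨0, by simpa [listCost] using hle⟩
            · exact exists_take_of_le_listBudget hlt hIH
          obtain ⟨u, hu⟩ := hwit
          obtain ⟨t, ht⟩ := filter_take_comm (fun x => decide (x ∈ UB BS')) T u
          rw [ht] at hu
          have hcover : (T.take t).filter
              (fun x => decide (x ∈ UB BS') || decide (x ∈ Z)) = T.take t := by
            refine List.filter_eq_self.mpr ?_
            intro a ha
            have h0 := (hT.2 a).mp (List.take_subset _ _ ha)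
            rw [hshape, UB_append, Finset.mem_union] at h0
            rcases h0 with h0 | h0
            · simp [h0]
            · rw [UB_cons, UB_nil, Finset.union_empty] at h0
              simp [h0]
          have hdisj2 : ∀ x ∈ T.take t,
              ¬(decide (x ∈ UB BS') = true ∧ decide (x ∈ Z) = true) := by
            rintro x hx ⟨h1, h2⟩
            rw [decide_eq_true_eq] at h1 h2
            obtain ⟨C, hC, hxC⟩ := mem_UB.mp h1
            have hpairD := (List.pairwise_append.mp (hshape ▸ hGB.disj)).2.2
            exact hpairD C hC Z (List.mem_singleton_self _) x hxC h2
          have hsplitc := listCost_filter_or (c := c) (fun x => decide (x ∈ UB BS'))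
            (fun x => decide (x ∈ Z)) (T.take t) hdisj2
          rw [hcover] at hsplitc
          have hZmem : Z ∈ BS := by
            rw [hshape]; exact List.mem_append_right _ (List.mem_singleton_self _)
          have hZideal : IsIdealIn r Z ((T.take t).toFinset ∩ Z) :=
            ideal_inter_block (subset_UB hZmem) (sched_take_ideal hT hDC t)
          have hZcost : (0:ℝ) ≤ listCost c ((T.take t).filter (fun x => decide (x ∈ Z))) := by
            have h1 := ideal_cost_ge hr (hGB.irr Z hZmem) _ hZideal
            rw [min_eq_left (hnn Z hZmem)] at h1
            have h2 : fB c T Z t = setCost c ((T.take t).toFinset ∩ Z) :=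
              fB_eq_setCost hT.1 Z t
            rw [fB] at h2
            rw [h2]
            exact h1
          have hfinal : ((B₀ :: P').map (setCost c)).sum + setBudget r c B ≤
              listCost c (T.take t) := by
            rw [hsplitc]
            linarith
          exact le_trans hfinal (listCost_take_le T t)

end OPT3

/-! ### Section G: assembly -/

lemma listBudget_flatten (LS : List (List ι)) :
    listBudget c LS.flatten
      = vb (LS.map (fun s => (listCost c s, listBudget c s))) := by
  induction LS with
  | nil => simp [List.flatten_nil, listBudget_nil, vb_nil]
  | cons S T ih =>
    rw [List.flatten_cons, listBudget_append, ih, List.map_cons]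
    rfl

lemma UB_map_toFinset (SS : List (List ι)) :
    UB (SS.map List.toFinset) = SS.flatten.toFinset := by
  induction SS with
  | nil => simp [UB_nil]
  | cons S T ih =>
    rw [List.map_cons, UB_cons, List.flatten_cons, List.toFinset_append, ih]

lemma DC_no_back {S1 S2 : List ι} (hnd : (S1 ++ S2).Nodup) (hDC : DC r (S1 ++ S2))
    {x y : ι} (hx : x ∈ S2) (hy : y ∈ S1) : ¬r x y := by
  intro hrxy
  have h1 : y ∈ (S1 ++ S2).take S1.length := by
    rw [List.take_left]
    exact hy
  have h2 := hDC S1.length y h1 x (List.mem_append_right _ hx) hrxy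
  rw [List.take_left] at h2
  exact (List.nodup_append.mp hnd).2.2 x h2 x hx rfl

lemma flatten_pairwise_no_back (SS : List (List ι)) (hnd : SS.flatten.Nodup)
    (hDC : DC r SS.flatten) :
    SS.Pairwise (fun A B => ∀ x ∈ B, ∀ y ∈ A, ¬r x y) := by
  induction SS with
  | nil => exact List.Pairwise.nil
  | cons S T ih =>
    rw [List.flatten_cons] at hnd hDC
    have hndT : T.flatten.Nodup := (List.nodup_append.mp hnd).2.1
    have hDCT : DC r T.flatten := by
      have h1 := hDC.drop hnd S.length
      rwa [List.drop_left] at h1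
    refine List.pairwise_cons.mpr ⟨?_, ih hndT hDCT⟩
    intro S' hS' x hx y hy
    exact DC_no_back hnd hDC (List.mem_flatten.mpr ⟨S', hS', hx⟩) hy

section Main
variable (hr : IsPartialOrder ι r)
include hr

lemma cbr_neg_left {X Y : Finset ι} (h : cbrLE r c X Y) (hY : setCost c Y < 0) :
    setCost c X < 0 := by
  rcases h with ⟨h1, _⟩ | ⟨h1, _⟩ | ⟨h1, _⟩ | ⟨_, h2, _⟩ <;> linarith

omit hr in
lemma setCost_UB (BS : List (Finset ι))
    (hdisj : BS.Pairwise (fun A B => ∀ x, x ∈ A → x ∉ B)) :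
    setCost c (UB BS) = (BS.map (setCost c)).sum := by
  induction BS with
  | nil => simp [UB_nil, setCost]
  | cons C T ih =>
    rw [UB_cons, List.map_cons, List.sum_cons, ← ih (List.pairwise_cons.mp hdisj).2]
    have hd : Disjoint C (UB T) := by
      rw [Finset.disjoint_left]
      intro x hx hxU
      obtain ⟨A, hA, hxA⟩ := mem_UB.mp hxU
      exact (List.pairwise_cons.mp hdisj).1 A hA x hx hxA
    rw [setCost, setCost, setCost, Finset.sum_union hd]

omit hr in
lemma setCost_decomp (BS : List (Finset ι))
    (hdisj : BS.Pairwise (fun A B => ∀ x, x ∈ A → x ∉ B))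
    {I : Finset ι} (hIsub : I ⊆ UB BS) :
    setCost c I = (BS.map (fun C => setCost c (I ∩ C))).sum := by
  induction BS generalizing I with
  | nil =>
    have hIe : I = ∅ := Finset.subset_empty.mp (by rwa [UB_nil] at hIsub)
    subst hIe
    simp [setCost]
  | cons C T ih =>
    have hdT := (List.pairwise_cons.mp hdisj).2
    have hdC := (List.pairwise_cons.mp hdisj).1
    set I' := I ∩ UB T with hI'
    have hsplit : I = (I ∩ C) ∪ I' := by
      ext x
      rw [Finset.mem_union, Finset.mem_inter, hI', Finset.mem_inter]
      constructor
      · intro hx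
        have := hIsub hx
        rw [UB_cons, Finset.mem_union] at this
        rcases this with h | h
        · exact Or.inl ⟨hx, h⟩
        · exact Or.inr ⟨hx, h⟩
      · rintro (⟨h, _⟩ | ⟨h, _⟩) <;> exact h
    have hd : Disjoint (I ∩ C) I' := by
      rw [Finset.disjoint_left]
      intro x hx hx'
      rw [hI', Finset.mem_inter] at hx'
      obtain ⟨A, hA, hxA⟩ := mem_UB.mp hx'.2
      exact hdC A hA x (Finset.mem_inter.mp hx).2 hxA
    have hIH := ih hdT (I := I') Finset.inter_subset_right
    have hpieces : ∀ A ∈ T, I' ∩ A = I ∩ A := by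
      intro A hA
      have hsub2 : UB T ∩ A = A :=
        Finset.inter_eq_right.mpr (fun x hx => mem_UB.mpr ⟨A, hA, hx⟩)
      rw [hI', Finset.inter_assoc, hsub2]
    have hmapeq : T.map (fun A => setCost c (I' ∩ A)) = T.map (fun A => setCost c (I ∩ A)) := by
      refine List.map_congr_left ?_
      intro A hA
      rw [hpieces A hA]
    rw [List.map_cons, List.sum_cons, ← hmapeq, ← hIH]
    nth_rewrite 1 [hsplit]
    rw [setCost, Finset.sum_union hd]
    rfl

lemma ideal_budget_le_vb : ∀ (BS : List (Finset ι)),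
    BS.Pairwise (fun A B => ∀ x, x ∈ A → x ∉ B) →
    BS.Pairwise (fun A B => ∀ x ∈ B, ∀ y ∈ A, ¬r x y) →
    ∀ {I : Finset ι}, I ⊆ UB BS →
    setBudget r c I ≤ vb (BS.map (fun C => (setCost c (I ∩ C), setBudget r c (I ∩ C)))) := by
  intro BS
  induction BS with
  | nil =>
    intro _ _ I hIsub
    have hIe : I = ∅ := Finset.subset_empty.mp (by rwa [UB_nil] at hIsub)
    subst hIe
    rw [List.map_nil, vb_nil]
    refine le_trans (setBudget_le (S := ([] : List ι)) ⟨List.nodup_nil, by simp⟩ DC_nil) ?_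
    rw [listBudget_nil]
  | cons C T ih =>
    intro hdisj hfwd I hIsub
    have hdT := (List.pairwise_cons.mp hdisj).2
    have hdC := (List.pairwise_cons.mp hdisj).1
    have hfT := (List.pairwise_cons.mp hfwd).2
    have hfC := (List.pairwise_cons.mp hfwd).1
    obtain ⟨S1, hS1, hS1DC, hS1b⟩ := exists_opt_schedule (r := r) (c := c) hr (I ∩ C)
    set I' := I ∩ UB T with hI'
    obtain ⟨S2, hS2, hS2DC, hS2b⟩ := exists_opt_schedule (r := r) (c := c) hr I'
    have hIH := ih hdT hfT (I := I') Finset.inter_subset_right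
    have hd12 : ∀ x ∈ S1, x ∉ S2 := by
      intro x hx hx2
      have h1 := (hS1.2 x).mp hx
      have h2 := (hS2.2 x).mp hx2
      rw [hI', Finset.mem_inter] at h2
      obtain ⟨A, hA, hxA⟩ := mem_UB.mp h2.2
      exact hdC A hA x (Finset.mem_inter.mp h1).2 hxA
    have hsched : IsScheduleOf I (S1 ++ S2) := by
      constructor
      · exact List.nodup_append.mpr ⟨hS1.1, hS2.1, fun a ha b hb hab => hd12 a ha (hab ▸ hb)⟩
      · intro j
        rw [List.mem_append, hS1.2 j, hS2.2 j, hI', Finset.mem_inter, Finset.mem_inter]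
        constructor
        · rintro (⟨h, _⟩ | ⟨h, _⟩) <;> exact h
        · intro hj
          have := hIsub hj
          rw [UB_cons, Finset.mem_union] at this
          rcases this with h | h
          · exact Or.inl ⟨hj, h⟩
          · exact Or.inr ⟨hj, h⟩
    have hDCapp : DC r (S1 ++ S2) := by
      refine DC.append hS1DC hS2DC ?_
      intro x hx y hy hrxy
      have h1 := (hS2.2 x).mp hx
      rw [hI', Finset.mem_inter] at h1
      obtain ⟨A, hA, hxA⟩ := mem_UB.mp h1.2
      have h2 := (hS1.2 y).mp hy
      exact hfC A hA x hxA y (Finset.mem_inter.mp h2).2 hrxy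
    have h1 : setBudget r c I ≤ listBudget c (S1 ++ S2) := setBudget_le hsched hDCapp
    rw [listBudget_append, hS1b, listCost_of_sched hS1, hS2b] at h1
    refine le_trans h1 ?_
    have hpieces : ∀ A ∈ T, I' ∩ A = I ∩ A := by
      intro A hA
      have hsub2 : UB T ∩ A = A :=
        Finset.inter_eq_right.mpr (fun x hx => mem_UB.mpr ⟨A, hA, hx⟩)
      rw [hI', Finset.inter_assoc, hsub2]
    have hmapeq : T.map (fun A => (setCost c (I' ∩ A), setBudget r c (I' ∩ A)))
        = T.map (fun A => (setCost c (I ∩ A), setBudget r c (I ∩ A))) := by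
      refine List.map_congr_left ?_
      intro A hA
      rw [hpieces A hA]
    rw [List.map_cons]
    show max _ _ ≤ max _ (_ + vb _)
    rw [← hmapeq]
    exact max_le_max (le_refl _) (by linarith [hIH])

omit hr in
lemma vb_blocks_le (hrr : IsPartialOrder ι r) : ∀ (BSl : List (Finset ι)) (B : ℝ), 0 ≤ B →
    (∀ P Bk Q, BSl = P ++ Bk :: Q → (P.map (setCost c)).sum + setBudget r c Bk ≤ B) →
    vb (BSl.map (fun C => (setCost c C, setBudget r c C))) ≤ B := by
  intro BSl
  induction BSl with
  | nil => intro B hB _; rw [List.map_nil, vb_nil]; exact hB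
  | cons C T ih =>
    intro B hB h
    rw [List.map_cons]
    show max _ _ ≤ B
    have h1 : setBudget r c C ≤ B := by
      have := h [] C T rfl
      simpa using this
    have h2 : setCost c C ≤ setBudget r c C := setCost_le_setBudget hrr C
    refine max_le h1 ?_
    have hihB : vb (T.map (fun A => (setCost c A, setBudget r c A))) ≤ B - setCost c C := by
      refine ih (B - setCost c C) (by linarith) ?_
      intro P Bk Q hPQ
      have h3 := h (C :: P) Bk Q (by rw [hPQ]; rfl)
      rw [List.map_cons, List.sum_cons] at h3
      linarith
    linarith

end Main

section Final
variable (hr : IsPartialOrder ι r)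
include hr

theorem main_assembly (c : ι → ℝ) (N : Finset ι) (SS : List (List ι))
    (h : IncIrrStructure r c N SS) :
    ∃ l ≤ SS.length,
      IsIdealIn r N ((SS.take l).flatten.toFinset) ∧
      ∀ I, IsIdealIn r N I →
        setReturn r c ((SS.take l).flatten.toFinset) ≤ setReturn r c I := by
  classical
  obtain ⟨hflat, hresp, hblocks, hincr⟩ := h
  set BS := SS.map List.toFinset with hBSdef
  have hfDC : DC r SS.flatten := respectsOrder_iff_DC.mp hresp
  have hndf : SS.flatten.Nodup := hflat.1
  have hndP : (∀ l ∈ SS, l.Nodup) ∧ SS.Pairwise List.Disjoint := List.nodup_flatten.mp hndf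
  -- the block structure
  have hGB : GB r c BS := by
    constructor
    · intro B hB J hJ
      obtain ⟨S, hS, rfl⟩ := List.mem_map.mp hB
      exact (hblocks S hS).1.2 J hJ
    · rw [hBSdef]
      refine List.pairwise_map.mpr ?_
      exact List.pairwise_iff_get.mpr (fun i j hij => hincr i j hij)
    · rw [hBSdef]
      refine List.pairwise_map.mpr ?_
      refine hndP.2.imp ?_
      intro a b hab x hx hxb
      rw [List.mem_toFinset] at hx hxb
      exact hab hx hxb
    · rw [hBSdef]
      refine List.pairwise_map.mpr ?_
      refine (flatten_pairwise_no_back SS hndf hfDC).imp ?_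
      intro a b hab x hx y hy
      rw [List.mem_toFinset] at hx hy
      exact hab x hx y hy
  have hUBN : UB BS = N := by
    rw [hBSdef, UB_map_toFinset, IsScheduleOf.toFinset_eq hflat]
  -- the prefix unions and their basic properties
  have hPl : ∀ l : ℕ, (SS.take l).flatten.toFinset = UB (BS.take l) := by
    intro l
    rw [hBSdef, ← List.map_take, UB_map_toFinset]
  have hprefix : ∀ l : ℕ, (SS.take l).flatten <+: SS.flatten := by
    intro l
    exact ⟨(SS.drop l).flatten, by rw [← List.flatten_append, List.take_append_drop]⟩
  have hPideal : ∀ l : ℕ, IsIdealIn r N ((SS.take l).flatten.toFinset) := by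
    intro l
    have heq : (SS.take l).flatten = SS.flatten.take ((SS.take l).flatten.length) :=
      List.prefix_iff_eq_take.mp (hprefix l)
    rw [heq]
    exact sched_take_ideal hflat hfDC _
  -- budget of prefix unions equals the virtual budget
  have hgoodpair : ∀ C : Finset ι, vgood (setCost c C, setBudget r c C) := by
    intro C
    exact ⟨setBudget_nonneg hr C, setCost_le_setBudget hr C⟩
  have hPbud : ∀ l : ℕ, setBudget r c (UB (BS.take l))
      = vb ((BS.take l).map (fun C => (setCost c C, setBudget r c C))) := by
    intro l
    have hGBl : GB r c (BS.take l) := hGB.sublist (List.take_sublist l BS)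
    refine le_antisymm ?_ ?_
    · -- ≤ : exhibit the concatenated schedule
      set Tl := (SS.take l).flatten with hTl
      have hndTl : Tl.Nodup := List.Nodup.sublist (hprefix l).sublist hndf
      have hTlsched : IsScheduleOf (UB (BS.take l)) Tl := by
        rw [← hPl l]
        exact ⟨hndTl, fun j => List.mem_toFinset.symm⟩
      have hTlDC : DC r Tl := by
        have heq : Tl = SS.flatten.take (Tl.length) :=
          List.prefix_iff_eq_take.mp (hprefix l)
        rw [heq]
        exact hfDC.take _
      refine le_trans (setBudget_le hTlsched hTlDC) ?_
      rw [listBudget_flatten]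
      have hmapeq : (SS.take l).map (fun s => (listCost c s, listBudget c s))
          = (BS.take l).map (fun C => (setCost c C, setBudget r c C)) := by
        rw [hBSdef, ← List.map_take, List.map_map]
        refine List.map_congr_left ?_
        intro S hS
        have hSmem : S ∈ SS := List.take_subset _ _ hS
        have h1 : listCost c S = setCost c S.toFinset :=
          listCost_eq_setCost (hndP.1 S hSmem)
        have h2 : listBudget c S = setBudget r c S.toFinset := (hblocks S hSmem).2.2
        simp only [Function.comp_apply, h1, h2]
      rw [hmapeq]
    · -- ≥ : via the optimality theorem
      obtain ⟨S₀, hS₀, hS₀DC, hS₀b⟩ :=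
        exists_opt_schedule (r := r) (c := c) hr (UB (BS.take l))
      refine vb_blocks_le hr (BS.take l) _ (setBudget_nonneg hr _) ?_
      intro P Bk Q hPQ
      rw [← hS₀b]
      exact opt_budget hr (BS.take l).length (BS.take l) (le_refl _) hGBl S₀ hS₀ hS₀DC
        P Bk Q hPQ
  -- return of prefix unions equals the virtual return
  have hPret : ∀ l : ℕ, setReturn r c ((SS.take l).flatten.toFinset)
      = vr ((BS.take l).map (fun C => (setCost c C, setBudget r c C))) := by
    intro l
    have hGBl : GB r c (BS.take l) := hGB.sublist (List.take_sublist l BS)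
    rw [setReturn, hPl l, hPbud l, vr]
    congr 1
    rw [setCost_UB _ hGBl.disj, vc, List.map_map]
    rfl
  -- comparison with an arbitrary ideal
  have hcompare : ∀ I, IsIdealIn r N I → ∃ l ≤ SS.length,
      setReturn r c ((SS.take l).flatten.toFinset) ≤ setReturn r c I := by
    intro I hI
    set L : List ((ℝ × ℝ) × (ℝ × ℝ)) := BS.map (fun C =>
      ((setCost c C, setBudget r c C), (setCost c (I ∩ C), setBudget r c (I ∩ C)))) with hLdef
    have hblocksub : ∀ C ∈ BS, C ⊆ N := by
      intro C hC
      rw [← hUBN]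
      exact subset_UB hC
    have hidealC : ∀ C ∈ BS, IsIdealIn r C (I ∩ C) := by
      intro C hC
      exact ideal_inter_block (hblocksub C hC) hI
    have hirrC : ∀ C ∈ BS, ∀ J, IsIdealIn r C J → cbrLE r c C J := hGB.irr
    obtain ⟨l, hlle, hle⟩ := virtual_exchange L
      (by
        intro q hq
        obtain ⟨C, hC, rfl⟩ := List.mem_map.mp hq
        exact ⟨hgoodpair C, hgoodpair (I ∩ C)⟩)
      (by
        intro q hq
        obtain ⟨C, hC, rfl⟩ := List.mem_map.mp hq
        have := ideal_return_ge hr (hirrC C hC) _ (hidealC C hC)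
        simp only [setReturn] at this
        exact this)
      (by
        intro q hq
        obtain ⟨C, hC, rfl⟩ := List.mem_map.mp hq
        intro hneg
        have := ideal_cost_ge hr (hirrC C hC) _ (hidealC C hC)
        rw [min_eq_right (le_of_lt hneg)] at this
        exact this)
      (by
        intro q hq
        obtain ⟨C, hC, rfl⟩ := List.mem_map.mp hq
        intro hneg
        exact neg_ideal_block_neg (hirrC C hC) (hidealC C hC) hneg)
      (by
        rw [hLdef]
        refine List.pairwise_map.mpr ?_
        refine hGB.incr.imp ?_
        intro a b hab hneg
        exact cbr_neg_left hr hab hneg)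
    have hlen : L.length = SS.length := by rw [hLdef, List.length_map, hBSdef, List.length_map]
    refine ⟨l, by omega, ?_⟩
    have hfsteq : (L.map Prod.fst).take l
        = (BS.take l).map (fun C => (setCost c C, setBudget r c C)) := by
      rw [hLdef, List.map_map, ← List.map_take]
      rfl
    have hsndeq : L.map Prod.snd
        = BS.map (fun C => (setCost c (I ∩ C), setBudget r c (I ∩ C))) := by
      rw [hLdef, List.map_map]
      rfl
    rw [hfsteq, hsndeq] at hle
    rw [hPret l]
    refine le_trans hle ?_
    -- vr of the pieces is at most the return of I
    have hIsub : I ⊆ UB BS := by rw [hUBN]; exact hI.1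
    have hbI : setBudget r c I
        ≤ vb (BS.map (fun C => (setCost c (I ∩ C), setBudget r c (I ∩ C)))) :=
      ideal_budget_le_vb hr BS hGB.disj hGB.forward hIsub
    have hcI : setCost c I = vc (BS.map (fun C => (setCost c (I ∩ C), setBudget r c (I ∩ C)))) := by
      rw [setCost_decomp BS hGB.disj hIsub]
      simp only [vc, List.map_map]
      rfl
    rw [setReturn, vr, ← hcI]
    linarith
  -- take the best prefix
  obtain ⟨lm, hlmmem, hlmmin⟩ := Finset.exists_min_image (Finset.range (SS.length + 1))
    (fun l => setReturn r c ((SS.take l).flatten.toFinset)) ⟨0, by simp⟩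
  have hlmle : lm ≤ SS.length := by
    have := Finset.mem_range.mp hlmmem
    omega
  refine ⟨lm, hlmle, hPideal lm, ?_⟩
  intro I hI
  obtain ⟨l, hlle, hle⟩ := hcompare I hI
  exact le_trans (hlmmin l (Finset.mem_range.mpr (by omega))) hle

end Final
end PMR

theorem prefix_min_return (r : ι → ι → Prop) (hr : IsPartialOrder ι r)
    (c : ι → ℝ) (N : Finset ι) (SS : List (List ι))
    (h : IncIrrStructure r c N SS) :
    ∃ l ≤ SS.length,
      IsIdealIn r N ((SS.take l).flatten.toFinset) ∧
      ∀ I, IsIdealIn r N I →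
        setReturn r c ((SS.take l).flatten.toFinset) ≤ setReturn r c I :=
  PMR.main_assembly hr c N SS h
end
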